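/- arXiv:2105.08152 — 7 statements merged into one kernel-verified Lean document; each statement's English description precedes it below -/
import Mathlib

section
/- The free exact completion E_ex of a category E with finite limits has finite limits: it has a terminal object, and every cospan has a pullback. -/
open CategoryTheory Limits

universe w v u

namespace ExCompletion

variable (E : Type u) [Category.{v} E] [HasFiniteLimits E]

/-- A pseudo-equivalence relation in a finitely complete category `E`. -/
structure PseudoEqRel where
  X0 : E
  X1 : E
  s : X1 ⟶ X0
  t : X1 ⟶ X0
  r : X0 ⟶ X1
  rs : r ≫ s = 𝟙 X0
  rt : r ≫ t = 𝟙 X0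
  v : X1 ⟶ X1
  vs : v ≫ s = t
  vt : v ≫ t = s
  m : pullback t s ⟶ X1
  ms : m ≫ s = pullback.fst t s ≫ s
  mt : m ≫ t = pullback.snd t s ≫ t

variable {E}

/-- A representative of a morphism of pseudo-equivalence relations. -/
@[ext]
structure Rep (X Y : PseudoEqRel E) where
  f0 : X.X0 ⟶ Y.X0
  f1 : X.X1 ⟶ Y.X1
  hs : f1 ≫ Y.s = X.s ≫ f0
  ht : f1 ≫ Y.t = X.t ≫ f0

/-- Two representatives are related iff there is a witness of equality. -/
def RepRel {X Y : PseudoEqRel E} (f g : Rep X Y) : Prop :=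
  ∃ h : X.X0 ⟶ Y.X1, h ≫ Y.s = f.f0 ∧ h ≫ Y.t = g.f0

theorem repRel_equivalence (X Y : PseudoEqRel E) : Equivalence (RepRel (X := X) (Y := Y)) := by
  constructor
  · intro f
    exact ⟨f.f0 ≫ Y.r, by rw [Category.assoc, Y.rs, Category.comp_id],
      by rw [Category.assoc, Y.rt, Category.comp_id]⟩
  · rintro f g ⟨h, h1, h2⟩
    exact ⟨h ≫ Y.v, by rw [Category.assoc, Y.vs, h2], by rw [Category.assoc, Y.vt, h1]⟩
  · rintro f g k ⟨h1, h1s, h1t⟩ ⟨h2, h2s, h2t⟩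
    refine ⟨pullback.lift h1 h2 (by rw [h1t, h2s]) ≫ Y.m, ?_, ?_⟩
    · rw [Category.assoc, Y.ms, ← Category.assoc, pullback.lift_fst, h1s]
    · rw [Category.assoc, Y.mt, ← Category.assoc, pullback.lift_snd, h2t]

instance repSetoid (X Y : PseudoEqRel E) : Setoid (Rep X Y) :=
  ⟨RepRel, repRel_equivalence X Y⟩

/-- The identity representative. -/
def Rep.id (X : PseudoEqRel E) : Rep X X :=
  ⟨𝟙 _, 𝟙 _, by simp, by simp⟩

/-- Composition of representatives. -/
def Rep.comp {X Y Z : PseudoEqRel E} (f : Rep X Y) (g : Rep Y Z) : Rep X Z :=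
  ⟨f.f0 ≫ g.f0, f.f1 ≫ g.f1, by rw [Category.assoc, g.hs, ← Category.assoc, f.hs, Category.assoc],
    by rw [Category.assoc, g.ht, ← Category.assoc, f.ht, Category.assoc]⟩

theorem repRel_comp {X Y Z : PseudoEqRel E} {f f' : Rep X Y} {g g' : Rep Y Z}
    (hf : RepRel f f') (hg : RepRel g g') : RepRel (f.comp g) (f'.comp g') := by
  obtain ⟨h1, h1s, h1t⟩ := hf
  obtain ⟨h2, h2s, h2t⟩ := hg
  refine (repRel_equivalence X Z).trans (y := f'.comp g) ?_ ?_
  · exact ⟨h1 ≫ g.f1, by rw [Category.assoc, g.hs, ← Category.assoc, h1s]; rfl,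
      by rw [Category.assoc, g.ht, ← Category.assoc, h1t]; rfl⟩
  · exact ⟨f'.f0 ≫ h2, by rw [Category.assoc, h2s]; rfl, by rw [Category.assoc, h2t]; rfl⟩

instance : Category.{v} (PseudoEqRel E) where
  Hom X Y := Quotient (repSetoid X Y)
  id X := ⟦Rep.id X⟧
  comp {X Y Z} := Quotient.map₂ Rep.comp (fun _ _ hf _ _ hg => repRel_comp hf hg)
  id_comp {X Y} f := by
    refine Quotient.inductionOn f (fun f => Quotient.sound ?_)
    exact ⟨f.f0 ≫ Y.r, by simp [Rep.comp, Rep.id, Y.rs], by simp [Y.rt]⟩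
  comp_id {X Y} f := by
    refine Quotient.inductionOn f (fun f => Quotient.sound ?_)
    exact ⟨f.f0 ≫ Y.r, by simp [Rep.comp, Rep.id, Y.rs], by simp [Y.rt]⟩
  assoc {W X Y Z} f g h := by
    refine Quotient.inductionOn₃ f g h (fun f g h => Quotient.sound ?_)
    exact ⟨(f.f0 ≫ g.f0 ≫ h.f0) ≫ Z.r, by simp [Rep.comp, Z.rs], by simp [Rep.comp, Z.rt]⟩

/-- The inclusion of `E` into its free exact completion, sending an object to the
discrete pseudo-equivalence relation on it. -/
noncomputable def discreteInclusion : E ⥤ PseudoEqRel E where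
  obj X :=
    { X0 := X, X1 := X, s := 𝟙 X, t := 𝟙 X, r := 𝟙 X
      rs := by simp, rt := by simp
      v := 𝟙 X, vs := by simp, vt := by simp
      m := pullback.fst (𝟙 X) (𝟙 X)
      ms := rfl
      mt := by simpa using pullback.condition (f := 𝟙 X) (g := 𝟙 X) }
  map f := ⟦⟨f, f, by simp, by simp⟩⟧
  map_id X := Quotient.sound ⟨𝟙 X, by simp [Rep.id], by simp [Rep.id]⟩
  map_comp f g := Quotient.sound ⟨f ≫ g, by simp, by simp [Rep.comp]⟩

/-! ### Terminal object -/

noncomputable def termObj : PseudoEqRel E where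
  X0 := ⊤_ E
  X1 := ⊤_ E
  s := 𝟙 _
  t := 𝟙 _
  r := 𝟙 _
  rs := by simp
  rt := by simp
  v := 𝟙 _
  vs := by simp
  vt := by simp
  m := pullback.fst _ _
  ms := rfl
  mt := by simpa using pullback.condition (f := 𝟙 (⊤_ E)) (g := 𝟙 (⊤_ E))

/-! ### Pullbacks -/

section PullbackConstruction

variable {X Y Z : PseudoEqRel E} (f : Rep X Z) (g : Rep Y Z)

/-- The object of triples `(x, z, y)` with `Z.s z = f₀ x` and `Z.t z = g₀ y`. -/
noncomputable abbrev P0 : E := pullback (pullback.snd f.f0 Z.s ≫ Z.t) g.f0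

noncomputable def piX : P0 f g ⟶ X.X0 := pullback.fst _ _ ≫ pullback.fst f.f0 Z.s

noncomputable def piZ : P0 f g ⟶ Z.X1 := pullback.fst _ _ ≫ pullback.snd f.f0 Z.s

noncomputable def piY : P0 f g ⟶ Y.X0 := pullback.snd (pullback.snd f.f0 Z.s ≫ Z.t) g.f0

theorem piZ_s : piZ f g ≫ Z.s = piX f g ≫ f.f0 := by
  rw [piZ, piX, Category.assoc, Category.assoc, ← pullback.condition]

theorem piZ_t : piZ f g ≫ Z.t = piY f g ≫ g.f0 := by
  rw [piZ, piY, Category.assoc, ← pullback.condition]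

noncomputable def liftP0 {W : E} (a : W ⟶ X.X0) (b : W ⟶ Y.X0) (z : W ⟶ Z.X1)
    (hzs : z ≫ Z.s = a ≫ f.f0) (hzt : z ≫ Z.t = b ≫ g.f0) : W ⟶ P0 f g :=
  pullback.lift (pullback.lift a z hzs.symm) b
    (by rw [← Category.assoc, pullback.lift_snd, hzt])

@[simp] theorem liftP0_piX {W : E} (a : W ⟶ X.X0) (b : W ⟶ Y.X0) (z : W ⟶ Z.X1)
    (hzs : z ≫ Z.s = a ≫ f.f0) (hzt : z ≫ Z.t = b ≫ g.f0) :
    liftP0 f g a b z hzs hzt ≫ piX f g = a := by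
  rw [liftP0, piX, ← Category.assoc, pullback.lift_fst, pullback.lift_fst]

@[simp] theorem liftP0_piZ {W : E} (a : W ⟶ X.X0) (b : W ⟶ Y.X0) (z : W ⟶ Z.X1)
    (hzs : z ≫ Z.s = a ≫ f.f0) (hzt : z ≫ Z.t = b ≫ g.f0) :
    liftP0 f g a b z hzs hzt ≫ piZ f g = z := by
  rw [liftP0, piZ, ← Category.assoc, pullback.lift_fst, pullback.lift_snd]

@[simp] theorem liftP0_piY {W : E} (a : W ⟶ X.X0) (b : W ⟶ Y.X0) (z : W ⟶ Z.X1)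
    (hzs : z ≫ Z.s = a ≫ f.f0) (hzt : z ≫ Z.t = b ≫ g.f0) :
    liftP0 f g a b z hzs hzt ≫ piY f g = b := by
  rw [liftP0, piY, pullback.lift_snd]

/-- Pairs `(ξ, a)` with `X.s ξ = piX a`. -/
noncomputable abbrev PB : E := pullback X.s (piX f g)

/-- Triples `(ξ, a, b)` with `X.s ξ = piX a`, `X.t ξ = piX b`. -/
noncomputable abbrev PC : E := pullback (pullback.fst X.s (piX f g) ≫ X.t) (piX f g)

noncomputable def cxi : PC f g ⟶ X.X1 := pullback.fst _ _ ≫ pullback.fst X.s (piX f g)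

noncomputable def ca : PC f g ⟶ P0 f g := pullback.fst _ _ ≫ pullback.snd X.s (piX f g)

noncomputable def cb : PC f g ⟶ P0 f g :=
  pullback.snd (pullback.fst X.s (piX f g) ≫ X.t) (piX f g)

theorem cxi_s : cxi f g ≫ X.s = ca f g ≫ piX f g := by
  rw [cxi, ca, Category.assoc, Category.assoc, pullback.condition]

theorem cxi_t : cxi f g ≫ X.t = cb f g ≫ piX f g := by
  rw [cxi, cb, Category.assoc, ← pullback.condition]

/-- Quadruples `(η, ξ, a, b)` with additionally `Y.s η = piY a`. -/
noncomputable abbrev PD : E := pullback Y.s (ca f g ≫ piY f g)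

/-- The relation object for the pullback: quadruples `(ξ, η, a, b)` with
`X.s ξ = piX a`, `X.t ξ = piX b`, `Y.s η = piY a`, `Y.t η = piY b`. -/
noncomputable abbrev P1 : E :=
  equalizer (pullback.fst Y.s (ca f g ≫ piY f g) ≫ Y.t)
    (pullback.snd Y.s (ca f g ≫ piY f g) ≫ cb f g ≫ piY f g)

noncomputable def peta : P1 f g ⟶ Y.X1 :=
  equalizer.ι _ _ ≫ pullback.fst Y.s (ca f g ≫ piY f g)

noncomputable def pcc : P1 f g ⟶ PC f g :=
  equalizer.ι _ _ ≫ pullback.snd Y.s (ca f g ≫ piY f g)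

noncomputable def pa : P1 f g ⟶ P0 f g := pcc f g ≫ ca f g

noncomputable def pb : P1 f g ⟶ P0 f g := pcc f g ≫ cb f g

noncomputable def pxi : P1 f g ⟶ X.X1 := pcc f g ≫ cxi f g

theorem pxi_s : pxi f g ≫ X.s = pa f g ≫ piX f g := by
  rw [pxi, pa, Category.assoc, Category.assoc, cxi_s]

theorem pxi_t : pxi f g ≫ X.t = pb f g ≫ piX f g := by
  rw [pxi, pb, Category.assoc, Category.assoc, cxi_t]

theorem peta_s : peta f g ≫ Y.s = pa f g ≫ piY f g := by
  rw [peta, pa, pcc, Category.assoc, pullback.condition, Category.assoc, Category.assoc]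

theorem peta_t : peta f g ≫ Y.t = pb f g ≫ piY f g := by
  rw [peta, pb, pcc, Category.assoc, equalizer.condition, Category.assoc, Category.assoc]

noncomputable def liftP1 {W : E} (a b : W ⟶ P0 f g) (ξ : W ⟶ X.X1) (η : W ⟶ Y.X1)
    (hξs : ξ ≫ X.s = a ≫ piX f g) (hξt : ξ ≫ X.t = b ≫ piX f g)
    (hηs : η ≫ Y.s = a ≫ piY f g) (hηt : η ≫ Y.t = b ≫ piY f g) : W ⟶ P1 f g :=
  equalizer.lift
    (pullback.lift η
      (pullback.lift (pullback.lift ξ a hξs) b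
        (by rw [← Category.assoc, pullback.lift_fst, hξt]))
      (by rw [hηs, ca, ← Category.assoc, ← Category.assoc, pullback.lift_fst,
        pullback.lift_snd]))
    (by
      rw [pullback.lift_fst_assoc, pullback.lift_snd_assoc, cb, pullback.lift_snd_assoc, hηt])

@[simp] theorem liftP1_pcc {W : E} (a b : W ⟶ P0 f g) (ξ : W ⟶ X.X1) (η : W ⟶ Y.X1)
    (hξs : ξ ≫ X.s = a ≫ piX f g) (hξt : ξ ≫ X.t = b ≫ piX f g)
    (hηs : η ≫ Y.s = a ≫ piY f g) (hηt : η ≫ Y.t = b ≫ piY f g) :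
    liftP1 f g a b ξ η hξs hξt hηs hηt ≫ pcc f g =
      pullback.lift (pullback.lift ξ a hξs) b
        (by rw [← Category.assoc, pullback.lift_fst, hξt]) := by
  rw [liftP1, pcc, ← Category.assoc, equalizer.lift_ι, pullback.lift_snd]

@[simp] theorem liftP1_pa {W : E} (a b : W ⟶ P0 f g) (ξ : W ⟶ X.X1) (η : W ⟶ Y.X1)
    (hξs : ξ ≫ X.s = a ≫ piX f g) (hξt : ξ ≫ X.t = b ≫ piX f g)
    (hηs : η ≫ Y.s = a ≫ piY f g) (hηt : η ≫ Y.t = b ≫ piY f g) :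
    liftP1 f g a b ξ η hξs hξt hηs hηt ≫ pa f g = a := by
  rw [pa, ← Category.assoc, liftP1_pcc, ca, ← Category.assoc, pullback.lift_fst,
    pullback.lift_snd]

@[simp] theorem liftP1_pb {W : E} (a b : W ⟶ P0 f g) (ξ : W ⟶ X.X1) (η : W ⟶ Y.X1)
    (hξs : ξ ≫ X.s = a ≫ piX f g) (hξt : ξ ≫ X.t = b ≫ piX f g)
    (hηs : η ≫ Y.s = a ≫ piY f g) (hηt : η ≫ Y.t = b ≫ piY f g) :
    liftP1 f g a b ξ η hξs hξt hηs hηt ≫ pb f g = b := by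
  rw [pb, ← Category.assoc, liftP1_pcc, cb, pullback.lift_snd]

@[simp] theorem liftP1_pxi {W : E} (a b : W ⟶ P0 f g) (ξ : W ⟶ X.X1) (η : W ⟶ Y.X1)
    (hξs : ξ ≫ X.s = a ≫ piX f g) (hξt : ξ ≫ X.t = b ≫ piX f g)
    (hηs : η ≫ Y.s = a ≫ piY f g) (hηt : η ≫ Y.t = b ≫ piY f g) :
    liftP1 f g a b ξ η hξs hξt hηs hηt ≫ pxi f g = ξ := by
  rw [pxi, ← Category.assoc, liftP1_pcc, cxi, ← Category.assoc, pullback.lift_fst,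
    pullback.lift_fst]

@[simp] theorem liftP1_peta {W : E} (a b : W ⟶ P0 f g) (ξ : W ⟶ X.X1) (η : W ⟶ Y.X1)
    (hξs : ξ ≫ X.s = a ≫ piX f g) (hξt : ξ ≫ X.t = b ≫ piX f g)
    (hηs : η ≫ Y.s = a ≫ piY f g) (hηt : η ≫ Y.t = b ≫ piY f g) :
    liftP1 f g a b ξ η hξs hξt hηs hηt ≫ peta f g = η := by
  rw [liftP1, peta, ← Category.assoc, equalizer.lift_ι, pullback.lift_fst]

/-- The pullback object in the exact completion. -/
noncomputable def pbObj : PseudoEqRel E where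
  X0 := P0 f g
  X1 := P1 f g
  s := pa f g
  t := pb f g
  r := liftP1 f g (𝟙 _) (𝟙 _) (piX f g ≫ X.r) (piY f g ≫ Y.r)
    (by rw [Category.assoc, X.rs, Category.comp_id, Category.id_comp])
    (by rw [Category.assoc, X.rt, Category.comp_id, Category.id_comp])
    (by rw [Category.assoc, Y.rs, Category.comp_id, Category.id_comp])
    (by rw [Category.assoc, Y.rt, Category.comp_id, Category.id_comp])
  rs := by simp
  rt := by simp
  v := liftP1 f g (pb f g) (pa f g) (pxi f g ≫ X.v) (peta f g ≫ Y.v)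
    (by rw [Category.assoc, X.vs, pxi_t]) (by rw [Category.assoc, X.vt, pxi_s])
    (by rw [Category.assoc, Y.vs, peta_t]) (by rw [Category.assoc, Y.vt, peta_s])
  vs := by simp
  vt := by simp
  m := liftP1 f g (pullback.fst (pb f g) (pa f g) ≫ pa f g)
    (pullback.snd (pb f g) (pa f g) ≫ pb f g)
    (pullback.lift (pullback.fst (pb f g) (pa f g) ≫ pxi f g)
      (pullback.snd (pb f g) (pa f g) ≫ pxi f g)
      (by rw [Category.assoc, Category.assoc, pxi_t, pxi_s, ← Category.assoc,
        ← Category.assoc, pullback.condition]) ≫ X.m)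
    (pullback.lift (pullback.fst (pb f g) (pa f g) ≫ peta f g)
      (pullback.snd (pb f g) (pa f g) ≫ peta f g)
      (by rw [Category.assoc, Category.assoc, peta_t, peta_s, ← Category.assoc,
        ← Category.assoc, pullback.condition]) ≫ Y.m)
    (by rw [Category.assoc, X.ms, ← Category.assoc, pullback.lift_fst, Category.assoc,
        pxi_s, Category.assoc])
    (by rw [Category.assoc, X.mt, ← Category.assoc, pullback.lift_snd, Category.assoc,
        pxi_t, Category.assoc])
    (by rw [Category.assoc, Y.ms, ← Category.assoc, pullback.lift_fst, Category.assoc,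
        peta_s, Category.assoc])
    (by rw [Category.assoc, Y.mt, ← Category.assoc, pullback.lift_snd, Category.assoc,
        peta_t, Category.assoc])
  ms := by simp
  mt := by simp

/-- The first projection of the pullback. -/
noncomputable def projX : Rep (pbObj f g) X :=
  ⟨piX f g, pxi f g, pxi_s f g, pxi_t f g⟩

/-- The second projection of the pullback. -/
noncomputable def projY : Rep (pbObj f g) Y :=
  ⟨piY f g, peta f g, peta_s f g, peta_t f g⟩

end PullbackConstruction

end ExCompletion
open ExCompletion in
/-- The free exact completion `E_ex` of a category `E` with finite
limits has finite limits: it has a terminal object, and every cospan has a pullback. -/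
theorem freeExactCompletion_hasTerminal_hasPullbacks
    (E : Type u) [Category.{v} E] [HasFiniteLimits E] :
    HasTerminal (PseudoEqRel E) ∧
      ∀ (X Y Z : PseudoEqRel E) (f : X ⟶ Z) (g : Y ⟶ Z), HasPullback f g := by
  constructor
  · -- Terminal object
    haveI : ∀ A : PseudoEqRel E, Nonempty (A ⟶ termObj (E := E)) := fun A =>
      ⟨⟦⟨terminal.from A.X0, terminal.from A.X1, terminal.hom_ext _ _,
        terminal.hom_ext _ _⟩⟧⟩
    haveI : ∀ A : PseudoEqRel E, Subsingleton (A ⟶ termObj (E := E)) := fun A => by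
      constructor
      intro a b
      refine Quotient.inductionOn₂ a b (fun a b => Quotient.sound ?_)
      exact ⟨terminal.from A.X0, terminal.hom_ext _ _, terminal.hom_ext _ _⟩
    exact hasTerminal_of_unique (termObj (E := E))
  · -- Pullbacks
    intro X Y Z f g
    refine Quotient.inductionOn₂ f g (fun f g => ?_)
    refine HasLimit.mk ⟨PullbackCone.mk (W := pbObj f g) ⟦projX f g⟧ ⟦projY f g⟧
      (Quotient.sound ⟨piZ f g, piZ_s f g, piZ_t f g⟩), ?_⟩
    -- Data extracted from an arbitrary cone `c`
    have key : ∀ c : PullbackCone (⟦f⟧ : X ⟶ Z) ⟦g⟧,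
        ∃ l : c.pt ⟶ pbObj f g, l ≫ ⟦projX f g⟧ = c.fst ∧ l ≫ ⟦projY f g⟧ = c.snd ∧
          ∀ m : c.pt ⟶ pbObj f g,
            m ≫ ⟦projX f g⟧ = c.fst → m ≫ ⟦projY f g⟧ = c.snd → m = l := by
      intro c
      set W := c.pt with hW
      obtain ⟨u, hfst⟩ := Quotient.exists_rep (c.fst : W ⟶ X)
      obtain ⟨w, hsnd⟩ := Quotient.exists_rep (c.snd : W ⟶ Y)
      have hcond : (⟦Rep.comp u f⟧ : W ⟶ Z) = ⟦Rep.comp w g⟧ := by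
        have := c.condition
        rw [← hfst, ← hsnd] at this
        exact this
      obtain ⟨h, hhs, hht⟩ := Quotient.exact hcond
      -- the lift
      set l0 : W.X0 ⟶ P0 f g := liftP0 f g u.f0 w.f0 h hhs hht with hl0
      have hl0X : l0 ≫ piX f g = u.f0 := liftP0_piX f g _ _ _ _ _
      have hl0Y : l0 ≫ piY f g = w.f0 := liftP0_piY f g _ _ _ _ _
      set l1 : W.X1 ⟶ P1 f g := liftP1 f g (W.s ≫ l0) (W.t ≫ l0) u.f1 w.f1
        (by rw [u.hs, Category.assoc, hl0X]) (by rw [u.ht, Category.assoc, hl0X])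
        (by rw [w.hs, Category.assoc, hl0Y]) (by rw [w.ht, Category.assoc, hl0Y])
        with hl1
      refine ⟨⟦⟨l0, l1, liftP1_pa f g _ _ _ _ _ _ _ _, liftP1_pb f g _ _ _ _ _ _ _ _⟩⟧,
        ?_, ?_, ?_⟩
      · rw [← hfst]
        refine Quotient.sound ⟨u.f0 ≫ X.r, ?_, ?_⟩
        · rw [Category.assoc, X.rs, Category.comp_id]
          exact hl0X.symm
        · rw [Category.assoc, X.rt, Category.comp_id]
      · rw [← hsnd]
        refine Quotient.sound ⟨w.f0 ≫ Y.r, ?_, ?_⟩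
        · rw [Category.assoc, Y.rs, Category.comp_id]
          exact hl0Y.symm
        · rw [Category.assoc, Y.rt, Category.comp_id]
      · intro m hmX hmY
        obtain ⟨mr, hm⟩ := Quotient.exists_rep m
        subst hm
        rw [← hfst] at hmX
        rw [← hsnd] at hmY
        obtain ⟨hX, hXs, hXt⟩ := Quotient.exact hmX
        obtain ⟨hY, hYs, hYt⟩ := Quotient.exact hmY
        refine Quotient.sound ?_
        refine ⟨liftP1 f g mr.f0 l0 hX hY hXs (by rw [hXt, hl0X]) hYs (by rw [hYt, hl0Y]),
          ?_, ?_⟩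
        · exact liftP1_pa f g _ _ _ _ _ _ _ _
        · exact liftP1_pb f g _ _ _ _ _ _ _ _
    exact PullbackCone.IsLimit.mk _ (fun c => (key c).choose)
      (fun c => (key c).choose_spec.1) (fun c => (key c).choose_spec.2.1)
      (fun c m h1 h2 => (key c).choose_spec.2.2 m h1 h2)
end

section
/- Every object X of a category E, regarded as a discrete pseudo-equivalence relation (X1 = X0 = X with s = t = id), gives rise to a fully faithful functor E → E_ex. -/
open CategoryTheory Limits

universe w v u

open ExCompletion in
/-- Sending every object `X` of `E` to the discrete pseudo-equivalence
relation on it (`X1 = X0 = X` with `s = t = id`) gives rise to a fully faithful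
functor `E ⥤ E_ex`. -/
theorem discreteInclusion_full_and_faithful
    (E : Type u) [Category.{v} E] [HasFiniteLimits E] :
    (discreteInclusion (E := E)).Full ∧ (discreteInclusion (E := E)).Faithful := by
  constructor
  · constructor
    intro X Y f
    refine Quotient.inductionOn f (fun f => ⟨f.f0, Quotient.sound ?_⟩)
    exact ⟨f.f0, by simpa [discreteInclusion] using rfl, by simp [discreteInclusion]⟩
  · constructor
    intro X Y f g h
    obtain ⟨w, hw1, hw2⟩ := Quotient.exact h
    simp only [discreteInclusion, Category.comp_id] at hw1 hw2
    exact hw1 ▸ hw2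
end

section
/- For the prederivator E_ex, the restriction functor along the inclusion of objects incl_A : ob(A) → A, namely incl_A^* : E_ex(A) → E_ex(ob(A)), is conservative: a morphism of coherent A-diagrams whose restriction to the discrete category of objects is an isomorphism is itself an isomorphism. (Axiom Der2.) -/
open CategoryTheory Limits

universe w v u

namespace ExCompletion

noncomputable section

universe v' u'

variable {E : Type u} [Category.{v} E] [HasFiniteLimits E]
variable {A : Type u'} [Category.{v'} A]

/-- A coherent `A`-diagram in the free exact completion `E_ex`. -/
structure CohDiag (E : Type u) [Category.{v} E] [HasFiniteLimits E]
    (A : Type u') [Category.{v'} A] where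
  obj : A → PseudoEqRel E
  map : ∀ {a a' : A}, (a ⟶ a') → Rep (obj a) (obj a')
  wid : ∀ a : A, (obj a).X0 ⟶ (obj a).X1
  wid_s : ∀ a : A, wid a ≫ (obj a).s = 𝟙 _
  wid_t : ∀ a : A, wid a ≫ (obj a).t = (map (𝟙 a)).f0
  wcomp : ∀ {a a' a'' : A}, (a ⟶ a') → (a' ⟶ a'') → ((obj a).X0 ⟶ (obj a'').X1)
  wcomp_s : ∀ {a a' a''} (α : a ⟶ a') (α' : a' ⟶ a''),
    wcomp α α' ≫ (obj a'').s = (map α).f0 ≫ (map α').f0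
  wcomp_t : ∀ {a a' a''} (α : a ⟶ a') (α' : a' ⟶ a''),
    wcomp α α' ≫ (obj a'').t = (map (α ≫ α')).f0

/-- A representative of a morphism of coherent diagrams. -/
structure CohRep (X Y : CohDiag E A) where
  app : ∀ a : A, Rep (X.obj a) (Y.obj a)
  nat : ∀ {a a' : A}, (a ⟶ a') → ((X.obj a).X0 ⟶ (Y.obj a').X1)
  nat_s : ∀ {a a'} (α : a ⟶ a'), nat α ≫ (Y.obj a').s = (app a).f0 ≫ (Y.map α).f0
  nat_t : ∀ {a a'} (α : a ⟶ a'), nat α ≫ (Y.obj a').t = (X.map α).f0 ≫ (app a').f0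

/-- Witnessed equality of representatives of morphisms of coherent diagrams. -/
def CohRel {X Y : CohDiag E A} (f g : CohRep X Y) : Prop :=
  ∃ h : ∀ a : A, (X.obj a).X0 ⟶ (Y.obj a).X1,
    ∀ a, h a ≫ (Y.obj a).s = (f.app a).f0 ∧ h a ≫ (Y.obj a).t = (g.app a).f0

theorem cohRel_equivalence (X Y : CohDiag E A) : Equivalence (CohRel (X := X) (Y := Y)) := by
  constructor
  · intro f
    exact ⟨fun a => (f.app a).f0 ≫ (Y.obj a).r, fun a =>
      ⟨by rw [Category.assoc, (Y.obj a).rs, Category.comp_id],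
       by rw [Category.assoc, (Y.obj a).rt, Category.comp_id]⟩⟩
  · rintro f g ⟨h, hh⟩
    exact ⟨fun a => h a ≫ (Y.obj a).v, fun a =>
      ⟨by rw [Category.assoc, (Y.obj a).vs, (hh a).2],
       by rw [Category.assoc, (Y.obj a).vt, (hh a).1]⟩⟩
  · rintro f g k ⟨h1, hh1⟩ ⟨h2, hh2⟩
    refine ⟨fun a => pullback.lift (h1 a) (h2 a) (by rw [(hh1 a).2, (hh2 a).1]) ≫ (Y.obj a).m,
      fun a => ⟨?_, ?_⟩⟩
    · rw [Category.assoc, (Y.obj a).ms, ← Category.assoc, pullback.lift_fst, (hh1 a).1]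
    · rw [Category.assoc, (Y.obj a).mt, ← Category.assoc, pullback.lift_snd, (hh2 a).2]

instance cohSetoid (X Y : CohDiag E A) : Setoid (CohRep X Y) :=
  ⟨CohRel, cohRel_equivalence X Y⟩

/-- The identity representative of a coherent diagram. -/
def CohRep.id (X : CohDiag E A) : CohRep X X where
  app a := Rep.id (X.obj a)
  nat {a a'} α := (X.map α).f0 ≫ (X.obj a').r
  nat_s {a a'} α := by
    rw [Category.assoc, (X.obj a').rs, Category.comp_id]; simp [Rep.id]
  nat_t {a a'} α := by
    rw [Category.assoc, (X.obj a').rt, Category.comp_id]; simp [Rep.id]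

/-- Composition of representatives of morphisms of coherent diagrams. -/
def CohRep.comp {X Y Z : CohDiag E A} (f : CohRep X Y) (g : CohRep Y Z) : CohRep X Z where
  app a := (f.app a).comp (g.app a)
  nat {a a'} α :=
    pullback.lift ((f.app a).f0 ≫ g.nat α) (f.nat α ≫ (g.app a').f1)
      (by rw [Category.assoc, Category.assoc, g.nat_t, (g.app a').hs, ← Category.assoc,
        ← Category.assoc, f.nat_s]) ≫ (Z.obj a').m
  nat_s {a a'} α := by
    rw [Category.assoc, (Z.obj a').ms, ← Category.assoc, pullback.lift_fst,
      Category.assoc, g.nat_s]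
    simp [Rep.comp]
  nat_t {a a'} α := by
    rw [Category.assoc, (Z.obj a').mt, ← Category.assoc, pullback.lift_snd,
      Category.assoc, (g.app a').ht, ← Category.assoc, f.nat_t]
    simp [Rep.comp]

theorem cohRel_comp {X Y Z : CohDiag E A} {f f' : CohRep X Y} {g g' : CohRep Y Z}
    (hf : CohRel f f') (hg : CohRel g g') : CohRel (f.comp g) (f'.comp g') := by
  obtain ⟨h1, hh1⟩ := hf
  obtain ⟨h2, hh2⟩ := hg
  refine (cohRel_equivalence X Z).trans (y := f'.comp g) ?_ ?_
  · exact ⟨fun a => h1 a ≫ (g.app a).f1, fun a =>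
      ⟨by rw [Category.assoc, (g.app a).hs, ← Category.assoc, (hh1 a).1]; rfl,
       by rw [Category.assoc, (g.app a).ht, ← Category.assoc, (hh1 a).2]; rfl⟩⟩
  · exact ⟨fun a => (f'.app a).f0 ≫ h2 a, fun a =>
      ⟨by rw [Category.assoc, (hh2 a).1]; rfl, by rw [Category.assoc, (hh2 a).2]; rfl⟩⟩

theorem cohSound {X Y : CohDiag E A} {f g : CohRep X Y}
    (hfg : ∀ a, (f.app a).f0 = (g.app a).f0) :
    (Quotient.mk (cohSetoid X Y) f) = Quotient.mk (cohSetoid X Y) g :=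
  Quotient.sound ⟨fun a => (f.app a).f0 ≫ (Y.obj a).r, fun a =>
    ⟨by rw [Category.assoc, (Y.obj a).rs, Category.comp_id],
     by rw [Category.assoc, (Y.obj a).rt, Category.comp_id, hfg a]⟩⟩

instance : Category.{max u' v' v} (CohDiag E A) where
  Hom X Y := _root_.Quotient (cohSetoid X Y)
  id X := Quotient.mk _ (CohRep.id X)
  comp {X Y Z} := Quotient.map₂ CohRep.comp (fun _ _ hf _ _ hg => cohRel_comp hf hg)
  id_comp {X Y} f := by
    refine Quotient.inductionOn f (fun f => cohSound (fun a => ?_))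
    simp [CohRep.comp, CohRep.id, Rep.comp, Rep.id]
  comp_id {X Y} f := by
    refine Quotient.inductionOn f (fun f => cohSound (fun a => ?_))
    simp [CohRep.comp, CohRep.id, Rep.comp, Rep.id]
  assoc {W X Y Z} f g h := by
    refine Quotient.inductionOn₃ f g h (fun f g h => cohSound (fun a => ?_))
    simp [CohRep.comp, Rep.comp]

variable {A' : Type u'} [Category.{v'} A']

/-- Restriction of a coherent diagram along a functor. -/
def CohDiag.restrict (u : A' ⥤ A) (X : CohDiag E A) : CohDiag E A' where
  obj a := X.obj (u.obj a)
  map {a a'} α := X.map (u.map α)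
  wid a := X.wid (u.obj a)
  wid_s a := X.wid_s (u.obj a)
  wid_t a := by
    show X.wid (u.obj a) ≫ (X.obj (u.obj a)).t = (X.map (u.map (𝟙 a))).f0
    rw [show u.map (𝟙 a) = 𝟙 (u.obj a) from u.map_id a]
    exact X.wid_t (u.obj a)
  wcomp {a a' a''} α α' := X.wcomp (u.map α) (u.map α')
  wcomp_s α α' := X.wcomp_s _ _
  wcomp_t {a a' a''} α α' := by
    show X.wcomp (u.map α) (u.map α') ≫ (X.obj (u.obj a'')).t = (X.map (u.map (α ≫ α'))).f0
    rw [show u.map (α ≫ α') = u.map α ≫ u.map α' from u.map_comp α α']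
    exact X.wcomp_t _ _

/-- Restriction of a representative along a functor. -/
def CohRep.restrict (u : A' ⥤ A) {X Y : CohDiag E A} (f : CohRep X Y) :
    CohRep (X.restrict u) (Y.restrict u) where
  app a := f.app (u.obj a)
  nat {a a'} α := f.nat (u.map α)
  nat_s α := f.nat_s _
  nat_t α := f.nat_t _

/-- The restriction functor `E_ex(A) ⥤ E_ex(A')` along a functor `u : A' ⥤ A`. -/
def restrictFunctor (E : Type u) [Category.{v} E] [HasFiniteLimits E] (u : A' ⥤ A) :
    CohDiag E A ⥤ CohDiag E A' where
  obj X := X.restrict u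
  map {X Y} := Quotient.map (sa := cohSetoid X Y) (sb := cohSetoid _ _) (CohRep.restrict u) (by
    rintro f g ⟨h, hh⟩
    exact ⟨fun a => h (u.obj a), fun a => hh (u.obj a)⟩)
  map_id X := cohSound (fun a => rfl)
  map_comp {X Y Z} f g :=
    Quotient.inductionOn₂ f g (fun f g => cohSound (fun a => rfl))

/-- The constant coherent diagram on an object of `E_ex`. -/
def constObj (A : Type u') [Category.{v'} A] (X : PseudoEqRel E) : CohDiag E A where
  obj _ := X
  map _ := Rep.id X
  wid _ := X.r
  wid_s _ := X.rs
  wid_t _ := by rw [X.rt]; rfl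
  wcomp _ _ := X.r
  wcomp_s _ _ := by rw [X.rs]; simp [Rep.id]
  wcomp_t _ _ := by rw [X.rt]; rfl

/-- The constant representative on a representative. -/
def constRep (A : Type u') [Category.{v'} A] {X Y : PseudoEqRel E} (f : Rep X Y) :
    CohRep (constObj A X) (constObj A Y) where
  app _ := f
  nat _ := f.f0 ≫ Y.r
  nat_s _ := by
    show (f.f0 ≫ Y.r) ≫ Y.s = f.f0 ≫ (Rep.id Y).f0
    rw [Category.assoc]
    show f.f0 ≫ Y.r ≫ Y.s = f.f0 ≫ (Rep.id Y).f0
    rw [Y.rs]; simp [Rep.id]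
  nat_t _ := by
    show (f.f0 ≫ Y.r) ≫ Y.t = (Rep.id X).f0 ≫ f.f0
    rw [Category.assoc]
    show f.f0 ≫ Y.r ≫ Y.t = (Rep.id X).f0 ≫ f.f0
    rw [Y.rt]; simp [Rep.id]

/-- The constant-diagram functor `p_A^* : E_ex ⥤ E_ex(A)`. -/
def constDiag (E : Type u) [Category.{v} E] [HasFiniteLimits E]
    (A : Type u') [Category.{v'} A] : PseudoEqRel E ⥤ CohDiag E A where
  obj X := constObj A X
  map {X Y} := Quotient.map (sa := repSetoid X Y) (sb := cohSetoid _ _) (constRep A)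
    (by rintro f g ⟨h, h1, h2⟩; exact ⟨fun _ => h, fun _ => ⟨h1, h2⟩⟩)
  map_id X := cohSound (fun a => rfl)
  map_comp {X Y Z} f g :=
    Quotient.inductionOn₂ f g (fun f g => cohSound (fun a => rfl))

end

end ExCompletion

namespace ExCompletion

variable {E : Type u} [Category.{v} E] [HasFiniteLimits E]

/-- Transitivity of witnesses: composing two witnesses via `m`. -/
noncomputable def witTrans {Z : PseudoEqRel E} {C : E}
    (w1 w2 : C ⟶ Z.X1) (hc : w1 ≫ Z.t = w2 ≫ Z.s) : C ⟶ Z.X1 :=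
  pullback.lift w1 w2 hc ≫ Z.m

lemma witTrans_s {Z : PseudoEqRel E} {C : E}
    (w1 w2 : C ⟶ Z.X1) (hc : w1 ≫ Z.t = w2 ≫ Z.s) :
    witTrans w1 w2 hc ≫ Z.s = w1 ≫ Z.s := by
  rw [witTrans, Category.assoc, Z.ms, ← Category.assoc, pullback.lift_fst]

lemma witTrans_t {Z : PseudoEqRel E} {C : E}
    (w1 w2 : C ⟶ Z.X1) (hc : w1 ≫ Z.t = w2 ≫ Z.s) :
    witTrans w1 w2 hc ≫ Z.t = w2 ≫ Z.t := by
  rw [witTrans, Category.assoc, Z.mt, ← Category.assoc, pullback.lift_snd]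

end ExCompletion

open ExCompletion in
/-- For the prederivator `E_ex`, the restriction functor along the
inclusion of objects `incl_A : ob(A) → A`, namely `incl_A^* : E_ex(A) ⥤ E_ex(ob A)`,
is conservative: a morphism of coherent `A`-diagrams whose restriction to the discrete
category of objects is an isomorphism is itself an isomorphism (axiom Der2). -/
theorem restriction_to_objects_reflectsIsomorphisms
    (E : Type u) [Category.{v} E] [HasFiniteLimits E]
    (A : Type u') [Category.{u'} A] :
    (restrictFunctor (A := A) (A' := Discrete A) E
      (Discrete.functor (fun a => a))).ReflectsIsomorphisms := by
  constructor
  intro X Y f hf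
  obtain ⟨φ, rfl⟩ := Quotient.exists_rep f
  set u : Discrete A ⥤ A := Discrete.functor (fun a => a) with hu
  set F := restrictFunctor (A := A) (A' := Discrete A) E u with hF
  obtain ⟨ψ, hψ⟩ := Quotient.exists_rep (CategoryTheory.inv (F.map ⟦φ⟧))
  have hinv1 : CohRel ((φ.restrict u).comp ψ) (CohRep.id (X.restrict u)) := by
    apply Quotient.exact (s := cohSetoid _ _)
    have := IsIso.hom_inv_id (F.map ⟦φ⟧)
    rw [← hψ] at this
    exact this
  have hinv2 : CohRel (ψ.comp (φ.restrict u)) (CohRep.id (Y.restrict u)) := by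
    apply Quotient.exact (s := cohSetoid _ _)
    have := IsIso.inv_hom_id (F.map ⟦φ⟧)
    rw [← hψ] at this
    exact this
  obtain ⟨h1, hh1⟩ := hinv1
  obtain ⟨h2, hh2⟩ := hinv2
  let ψ0 : ∀ a : A, Rep (Y.obj a) (X.obj a) := fun a => ψ.app ⟨a⟩
  let h1' : ∀ a : A, (X.obj a).X0 ⟶ (X.obj a).X1 := fun a => h1 ⟨a⟩
  let h2' : ∀ a : A, (Y.obj a).X0 ⟶ (Y.obj a).X1 := fun a => h2 ⟨a⟩
  -- simplify the statements of the witnesses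
  have hh1s : ∀ a : A, h1' a ≫ (X.obj a).s = (φ.app a).f0 ≫ (ψ0 a).f0 :=
    fun a => (hh1 ⟨a⟩).1
  have hh1t : ∀ a : A, h1' a ≫ (X.obj a).t = 𝟙 (X.obj a).X0 := fun a => (hh1 ⟨a⟩).2
  have hh2s : ∀ a : A, h2' a ≫ (Y.obj a).s = (ψ0 a).f0 ≫ (φ.app a).f0 :=
    fun a => (hh2 ⟨a⟩).1
  have hh2t : ∀ a : A, h2' a ≫ (Y.obj a).t = 𝟙 (Y.obj a).X0 := fun a => (hh2 ⟨a⟩).2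
  have ψhs : ∀ a : A, (ψ0 a).f1 ≫ (X.obj a).s = (Y.obj a).s ≫ (ψ0 a).f0 :=
    fun a => (ψ0 a).hs
  have ψht : ∀ a : A, (ψ0 a).f1 ≫ (X.obj a).t = (Y.obj a).t ≫ (ψ0 a).f0 :=
    fun a => (ψ0 a).ht
  -- construct the inverse representative
  let G : CohRep Y X :=
    { app := fun a => ψ0 a
      nat := fun {a a'} α =>
        witTrans
          ((ψ0 a).f0 ≫ (X.map α).f0 ≫ h1' a' ≫ (X.obj a').v)
          (witTrans
            (((ψ0 a).f0 ≫ φ.nat α ≫ (ψ0 a').f1) ≫ (X.obj a').v)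
            (h2' a ≫ (Y.map α).f1 ≫ (ψ0 a').f1)
            (by
              simp only [Category.assoc, (X.obj a').vt]
              rw [ψhs a']
              rw [← Category.assoc ((Y.map α).f1), (Y.map α).hs]
              simp only [← Category.assoc]
              rw [hh2s a, Category.assoc (ψ0 a).f0 (φ.nat α), φ.nat_s]
              simp only [Category.assoc]))
          (by
            rw [witTrans_s]
            simp only [Category.assoc, (X.obj a').vt, (X.obj a').vs]
            rw [hh1s a', ψht a', ← Category.assoc (φ.nat α), φ.nat_t]
            simp only [Category.assoc])
      nat_s := fun {a a'} α => by
        rw [witTrans_s]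
        simp only [Category.assoc, (X.obj a').vs]
        rw [hh1t a', Category.comp_id]
      nat_t := fun {a a'} α => by
        rw [witTrans_t, witTrans_t]
        simp only [Category.assoc]
        rw [ψht a', ← Category.assoc ((Y.map α).f1), (Y.map α).ht,
          ← Category.assoc, ← Category.assoc, hh2t a, Category.id_comp] }
  refine ⟨⟨⟦G⟧, ?_, ?_⟩⟩
  · exact Quotient.sound ⟨fun a => h1 ⟨a⟩, fun a => ⟨hh1s a, hh1t a⟩⟩
  · exact Quotient.sound ⟨fun a => h2 ⟨a⟩, fun a => ⟨hh2s a, hh2t a⟩⟩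
end

section
/- For any prederivator D and set I, the class of D-equivalences over I is saturated: if a morphism u in Cat/I becomes an isomorphism in the localization of Cat/I at the D-equivalences over I, then u is itself a D-equivalence over I. Consequently the D-equivalences over I satisfy 2-out-of-3, 2-out-of-6, and closure under retracts. -/
open CategoryTheory

universe u

namespace Derivator

/-- The data of a prederivator: a strict 2-functor `Cat^op → CAT`. -/
structure PreDer : Type (u + 2) where
  Dia : Cat.{u, u} → Type (u + 1)
  str : ∀ A, Category.{u} (Dia A)
  res : ∀ {A B : Cat.{u, u}}, (A ⟶ B) → (Dia B ⥤ Dia A)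
  res_id : ∀ A : Cat.{u, u}, res (𝟙 A) = 𝟭 (Dia A)
  res_comp : ∀ {A B C : Cat.{u, u}} (F : A ⟶ B) (G : B ⟶ C), res (F ≫ G) = res G ⋙ res F
  transf : ∀ {A B : Cat.{u, u}} {F G : A ⟶ B}, (F ⟶ G) → (res F ⟶ res G)
  transf_id : ∀ {A B : Cat.{u, u}} (F : A ⟶ B), transf (𝟙 F) = 𝟙 (res F)
  transf_comp : ∀ {A B : Cat.{u, u}} {F G H : A ⟶ B} (α : F ⟶ G) (β : G ⟶ H),
    transf (α ≫ β) = transf α ≫ transf β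

attribute [instance] PreDer.str

/-- The data of left Kan extensions (Der3L) for a prederivator. -/
structure LanData (D : PreDer.{u}) : Type (u + 1) where
  lan : ∀ {A B : Cat.{u, u}}, (A ⟶ B) → (D.Dia A ⥤ D.Dia B)
  adj : ∀ {A B : Cat.{u, u}} (F : A ⟶ B), lan F ⊣ D.res F

variable (D : PreDer.{u}) (L : LanData D)

/-- The component at `X` of the canonical mate `q_! p^* → v^* u_!` associated to a
square with a 2-cell `μ : u ∘ p ⟶ v ∘ q`. -/
def mateApp {P A B C : Cat.{u, u}} (p : P ⟶ A) (q : P ⟶ B) (F : A ⟶ C) (G : B ⟶ C)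
    (μ : p ≫ F ⟶ q ≫ G) (X : D.Dia A) :
    (L.lan q).obj ((D.res p).obj X) ⟶ (D.res G).obj ((L.lan F).obj X) :=
  ((L.adj q).homEquiv _ _).symm
    ((D.res p).map ((L.adj F).unit.app X) ≫
      eqToHom (Functor.congr_obj (D.res_comp p F).symm ((L.lan F).obj X)) ≫
      (D.transf μ).app ((L.lan F).obj X) ≫
      eqToHom (Functor.congr_obj (D.res_comp q G) ((L.lan F).obj X)))

/-- The inclusion of the discrete category of objects of `A` into `A`, as a 1-cell
of `Cat`. -/
def objIncl (A : Cat.{u, u}) : Cat.of (Discrete A) ⟶ A :=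
  (Discrete.functor (fun a => a)).toCatHom

/-- Axiom (Der1): `D` preserves products indexed by projective sets. -/
def Der1 (D : PreDer.{u}) : Prop :=
  ∀ (I : Type u),
    (∀ (β : Type u) (f : β → I), Function.Surjective f → ∃ g : I → β, ∀ i, f (g i) = i) →
    ∀ (Aι : I → Cat.{u, u}),
      (Functor.pi' fun i =>
        D.res (A := Aι i) (B := Cat.of (Σ i : I, (Aι i : Type u)))
          (CategoryTheory.Sigma.incl (C := fun i : I => (Aι i : Type u)) i).toCatHom).IsEquivalence

/-- Axiom (Der2): restriction to the discrete category of objects is conservative. -/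
def Der2 (D : PreDer.{u}) : Prop :=
  ∀ A : Cat.{u, u}, (D.res (objIncl A)).ReflectsIsomorphisms

/-- Axiom (Der4L): comma squares whose lower-left corner is discrete are `D`-exact. -/
def Der4L : Prop :=
  ∀ {A C : Cat.{u, u}} (F : A ⟶ C) (I : Type u) (G : Cat.of (Discrete I) ⟶ C)
    (X : D.Dia A),
    IsIso (mateApp D L
      (P := Cat.of (Comma (F.toFunctor : A ⥤ C) (G.toFunctor : Discrete I ⥤ C)))
      (Comma.fst (F.toFunctor : A ⥤ C) (G.toFunctor : Discrete I ⥤ C)).toCatHom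
      (Comma.snd (F.toFunctor : A ⥤ C) (G.toFunctor : Discrete I ⥤ C)).toCatHom
      F G (Comma.natTrans (F.toFunctor : A ⥤ C) (G.toFunctor : Discrete I ⥤ C)).toCatHom₂ X)

/-- A left derivator: a prederivator with left Kan extensions satisfying
(Der1), (Der2) and (Der4L). -/
def IsLeftDerivator : Prop := Der1 D ∧ Der2 D ∧ Der4L D L

/-- `u : A ⟶ B` lying over the discrete category on `I` (via `v : B ⟶ I`) is a
`D`-equivalence over `I`: `u^*` is fully faithful on the image of `v^*`. -/
def IsDEquiv (D : PreDer.{u}) {A B : Cat.{u, u}} (I : Type u) (F : A ⟶ B)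
    (V : B ⟶ Cat.of (Discrete I)) : Prop :=
  ∀ X Y : D.Dia (Cat.of (Discrete I)),
    Function.Bijective
      (fun g : (D.res V).obj X ⟶ (D.res V).obj Y => (D.res F).map g)

end Derivator

namespace Derivator

/-- The `D`-equivalences over `I`, as a morphism property of `Cat/I`. -/
def dEquivProp (D : PreDer.{u}) (I : Type u) :
    MorphismProperty (Over (Cat.of (Discrete I))) :=
  fun _ Y f => IsDEquiv D I f.left Y.hom

end Derivator

namespace Derivator

variable (D : PreDer.{u}) (I : Type u) (X Y : D.Dia (Cat.of (Discrete I)))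

lemma objEq {A B : Over (Cat.of (Discrete I))} (f : A ⟶ B) (Z : D.Dia (Cat.of (Discrete I))) :
    (D.res A.hom).obj Z = (D.res f.left).obj ((D.res B.hom).obj Z) := by
  rw [← Over.w f, D.res_comp]; rfl

def Φ : (Over (Cat.of (Discrete I)))ᵒᵖ ⥤ Type u where
  obj A := ((D.res A.unop.hom).obj X ⟶ (D.res A.unop.hom).obj Y)
  map {A B} f := TypeCat.ofHom fun g =>
    eqToHom (objEq D I f.unop X) ≫ (D.res f.unop.left).map g ≫ eqToHom (objEq D I f.unop Y).symm
  map_id A := by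
    ext g
    have h := Functor.congr_hom (D.res_id A.unop.left) g
    simp [h]
  map_comp {A B C} f g := by
    ext x
    have h := Functor.congr_hom (D.res_comp g.unop.left f.unop.left) x
    have hl : (f ≫ g).unop.left = g.unop.left ≫ f.unop.left := rfl
    simp only [TypeCat.Fun.toFun_apply, types_comp_apply, TypeCat.ofHom_apply, hl, h]
    simp [h, eqToHom_map]



lemma bij_conj {C : Type*} [Category C] {A A' B B' : C} (p : A' = A) (q : B = B') :
    Function.Bijective (fun h : A ⟶ B => eqToHom p ≫ h ≫ eqToHom q) := by
  subst p; subst q; simp only [eqToHom_refl, Category.id_comp, Category.comp_id]; exact Function.bijective_id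

lemma bij_iff {A B : Over (Cat.of (Discrete I))} (f : A ⟶ B) :
    dEquivProp D I f ↔
      ∀ X Y : D.Dia (Cat.of (Discrete I)),
        Function.Bijective ((Φ D I X Y).map f.op) := by
  constructor
  · intro hf X Y
    have : ((Φ D I X Y).map f.op : _ → _) =
        (fun h => eqToHom (objEq D I f X) ≫ h ≫ eqToHom (objEq D I f Y).symm) ∘
          (fun g : (D.res B.hom).obj X ⟶ (D.res B.hom).obj Y => (D.res f.left).map g) := rfl
    rw [this]
    exact (bij_conj _ _).comp (hf X Y)
  · intro h X Y
    have : (fun g : (D.res B.hom).obj X ⟶ (D.res B.hom).obj Y => (D.res f.left).map g) =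
        (fun h => eqToHom (objEq D I f X).symm ≫ h ≫ eqToHom (objEq D I f Y)) ∘
          (Φ D I X Y).map f.op := by
      funext g
      change (D.res f.left).map g = eqToHom (objEq D I f X).symm ≫ (eqToHom (objEq D I f X) ≫ (D.res f.left).map g ≫ eqToHom (objEq D I f Y).symm) ≫ eqToHom (objEq D I f Y)
      simp [Φ]
    rw [this]
    exact (bij_conj _ _).comp (h X Y)

def Ψ : Over (Cat.of (Discrete I)) ⥤ (Type u)ᵒᵖ := (Φ D I X Y).rightOp

lemma psi_inverts : (dEquivProp D I).IsInvertedBy (Ψ D I X Y) := by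
  intro A B f hf
  have hb := (bij_iff D I f).1 hf X Y
  have : IsIso ((Φ D I X Y).map f.op) := (isIso_iff_bijective _).2 hb
  exact (isIso_op_iff _).2 this

lemma saturation {A B : Over (Cat.of (Discrete I))} (f : A ⟶ B)
    (h : IsIso ((dEquivProp D I).Q.map f)) : dEquivProp D I f := by
  rw [bij_iff]
  intro X Y
  set W := dEquivProp D I
  have hG := psi_inverts D I X Y
  have fac := Localization.Construction.fac (Ψ D I X Y) hG
  have hf := Functor.congr_hom fac.symm f
  have : IsIso ((Ψ D I X Y).map f) := by
    rw [hf, Functor.comp_map]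
    infer_instance
  have : IsIso ((Φ D I X Y).map f.op) := by
    rw [← isIso_op_iff]
    exact this
  exact (isIso_iff_bijective _).1 this



end Derivator

open Derivator in
/-- For any prederivator `D` and set `I`, the class of
`D`-equivalences over `I` is saturated: any morphism of `Cat/I` that becomes an
isomorphism in the localization of `Cat/I` at the `D`-equivalences over `I` is itself a
`D`-equivalence over `I`.  Consequently the `D`-equivalences over `I` satisfy
2-out-of-3, 2-out-of-6, and are closed under retracts. -/
theorem dEquiv_saturated
    (D : PreDer.{u}) (I : Type u) :
    (∀ {X Y : Over (Cat.of (Discrete I))} (f : X ⟶ Y),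
        IsIso ((dEquivProp D I).Q.map f) → dEquivProp D I f) ∧
    (dEquivProp D I).HasTwoOutOfThreeProperty ∧
    (∀ {X Y Z W : Over (Cat.of (Discrete I))} (f : X ⟶ Y) (g : Y ⟶ Z) (h : Z ⟶ W),
        dEquivProp D I (f ≫ g) → dEquivProp D I (g ≫ h) →
        dEquivProp D I f ∧ dEquivProp D I g ∧ dEquivProp D I h ∧
          dEquivProp D I (f ≫ g ≫ h)) ∧
    (∀ {X Y X' Y' : Over (Cat.of (Discrete I))} (f : X ⟶ Y) (f' : X' ⟶ Y')
        (i : X ⟶ X') (r : X' ⟶ X) (j : Y ⟶ Y') (s : Y' ⟶ Y),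
        i ≫ r = 𝟙 X → j ≫ s = 𝟙 Y → i ≫ f' = f ≫ j → f' ≫ s = r ≫ f →
        dEquivProp D I f' → dEquivProp D I f) := by
  have key : ∀ {A B : Over (Cat.of (Discrete I))} (f : A ⟶ B),
      dEquivProp D I f ↔ IsIso ((dEquivProp D I).Q.map f) := fun f =>
    ⟨fun hf => (dEquivProp D I).Q_inverts f hf, saturation D I f⟩
  set Q := (dEquivProp D I).Q with hQdef
  refine ⟨fun f h => saturation D I f h, ?_, ?_, ?_⟩
  · refine { comp_mem := ?_, of_postcomp := ?_, of_precomp := ?_ }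
    · intro A B C f g hf hg
      rw [key] at hf hg ⊢
      rw [Functor.map_comp]
      infer_instance
    · intro A B C f g hg hfg
      rw [key] at hg hfg ⊢
      rw [Functor.map_comp] at hfg
      haveI := hg; haveI := hfg
      exact IsIso.of_isIso_comp_right (Q.map f) (Q.map g)
    · intro A B C f g hf hfg
      rw [key] at hf hfg ⊢
      rw [Functor.map_comp] at hfg
      haveI := hf; haveI := hfg
      exact IsIso.of_isIso_comp_left (Q.map f) (Q.map g)
  · intro A B C E f g h hfg hgh
    rw [key] at hfg hgh
    rw [Functor.map_comp] at hfg hgh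
    have hg : IsIso (Q.map g) := by
      have h1 : (inv (Q.map f ≫ Q.map g) ≫ Q.map f) ≫ Q.map g = 𝟙 _ := by
        rw [Category.assoc, IsIso.inv_hom_id]
      have h2 : Q.map g ≫ Q.map h ≫ inv (Q.map g ≫ Q.map h) = 𝟙 _ := by
        rw [← Category.assoc, IsIso.hom_inv_id]
      have h3 : inv (Q.map f ≫ Q.map g) ≫ Q.map f =
          Q.map h ≫ inv (Q.map g ≫ Q.map h) := by
        calc inv (Q.map f ≫ Q.map g) ≫ Q.map f
            = (inv (Q.map f ≫ Q.map g) ≫ Q.map f) ≫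
                Q.map g ≫ Q.map h ≫ inv (Q.map g ≫ Q.map h) := by
              rw [h2, Category.comp_id]
          _ = ((inv (Q.map f ≫ Q.map g) ≫ Q.map f) ≫ Q.map g) ≫
                Q.map h ≫ inv (Q.map g ≫ Q.map h) := by
              simp only [Category.assoc]
          _ = Q.map h ≫ inv (Q.map g ≫ Q.map h) := by rw [h1, Category.id_comp]
      exact ⟨Q.map h ≫ inv (Q.map g ≫ Q.map h), by rw [h2], by rw [← h3, h1]⟩
    haveI := hg; haveI := hfg; haveI := hgh
    have hf : IsIso (Q.map f) := IsIso.of_isIso_comp_right (Q.map f) (Q.map g)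
    have hh : IsIso (Q.map h) := IsIso.of_isIso_comp_left (Q.map g) (Q.map h)
    haveI := hf; haveI := hh
    refine ⟨(key f).2 hf, (key g).2 hg, (key h).2 hh, (key _).2 ?_⟩
    rw [Functor.map_comp, Functor.map_comp]
    infer_instance
  · intro A B A' B' f f' i r j s hi hj sq1 sq2 hf'
    have hQ : IsIso (Q.map f') := (key f').1 hf'
    rw [key]
    refine ⟨Q.map j ≫ inv (Q.map f') ≫ Q.map r, ?_, ?_⟩
    · rw [← Category.assoc, ← Q.map_comp, ← sq1, Q.map_comp, Category.assoc,
        IsIso.hom_inv_id_assoc, ← Q.map_comp, hi, Q.map_id]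
    · rw [Category.assoc, Category.assoc, ← Q.map_comp, ← sq2, Q.map_comp,
        IsIso.inv_hom_id_assoc, ← Q.map_comp, hj, Q.map_id]
end

section
/- If f : I → J is a function between sets and u : A → B is a D-equivalence over J for a left derivator D, then the pullback f^*(u) : f^*A → f^*B is a D-equivalence over I. -/
open CategoryTheory

universe u

namespace Derivator

universe v₁ u₁ v₂ u₂ v₃ u₃

/-- The strict pullback of categories along two functors into a common category. -/
structure CatPB {C : Type u₁} {B : Type u₂} {E : Type u₃}
    [Category.{v₁} C] [Category.{v₂} B] [Category.{v₃} E]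
    (V : C ⥤ E) (F : B ⥤ E) where
  c : C
  b : B
  h : V.obj c = F.obj b

instance CatPB.category {C : Type u₁} {B : Type u₂} {E : Type u₃}
    [Category.{v₁} C] [Category.{v₂} B] [Category.{v₃} E]
    (V : C ⥤ E) (F : B ⥤ E) : Category (CatPB V F) where
  Hom x y := {fg : (x.c ⟶ y.c) × (x.b ⟶ y.b) //
    V.map fg.1 = eqToHom x.h ≫ F.map fg.2 ≫ eqToHom y.h.symm}
  id x := ⟨(𝟙 x.c, 𝟙 x.b), by simp⟩
  comp {x y z} f g := ⟨(f.1.1 ≫ g.1.1, f.1.2 ≫ g.1.2), by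
    simp only [Functor.map_comp, f.2, g.2, Category.assoc, eqToHom_trans_assoc,
      eqToHom_refl, Category.id_comp]⟩
  id_comp f := by apply Subtype.ext; simp
  comp_id f := by apply Subtype.ext; simp
  assoc f g h := by apply Subtype.ext; simp

/-- First projection of the strict pullback of categories. -/
def CatPB.fst {C : Type u₁} {B : Type u₂} {E : Type u₃}
    [Category.{v₁} C] [Category.{v₂} B] [Category.{v₃} E]
    (V : C ⥤ E) (F : B ⥤ E) : CatPB V F ⥤ C where
  obj x := x.c
  map f := f.1.1

/-- The discrete functor induced by a function between sets. -/
def discMap {I J : Type u} (f : I → J) : Cat.of (Discrete I) ⟶ Cat.of (Discrete J) :=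
  (Discrete.functor (fun i => (⟨f i⟩ : Discrete J))).toCatHom

/-- The pullback `f^*(u)` of a functor `u : A ⟶ B` over `Discrete J` along a function
`f : I → J`. -/
def pbFunctor {I J : Type u} (f : I → J) {A B : Cat.{u, u}} (F : A ⟶ B)
    (V : B ⟶ Cat.of (Discrete J)) :
    CatPB (((discMap f).toFunctor : Discrete I ⥤ Discrete J)) (((F ≫ V).toFunctor : ↑A ⥤ Discrete J)) ⥤
      CatPB (((discMap f).toFunctor : Discrete I ⥤ Discrete J)) ((V.toFunctor : ↑B ⥤ Discrete J)) where
  obj x := ⟨x.c, (F.toFunctor : ↑A ⥤ ↑B).obj x.b, x.h⟩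
  map {x y} g := ⟨(g.1.1, (F.toFunctor : ↑A ⥤ ↑B).map g.1.2), g.2⟩
  map_id x := by apply Subtype.ext; exact Prod.ext rfl ((F.toFunctor : ↑A ⥤ ↑B).map_id x.b)
  map_comp g h := by apply Subtype.ext; exact Prod.ext rfl ((F.toFunctor : ↑A ⥤ ↑B).map_comp g.1.2 h.1.2)

end Derivator

namespace Derivator
open Function

section Helpers

variable {C : Type*} {D : Type*} [Category C] [Category D]

lemma comp_eq_id_of_obj (F : C ⥤ D) (G : D ⥤ C) [F.Faithful]
    (h1 : G ⋙ F = 𝟭 D) (hobj : ∀ X : C, G.obj (F.obj X) = X) : F ⋙ G = 𝟭 C := by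
  refine CategoryTheory.Functor.ext hobj (fun X Y q => ?_)
  apply F.map_injective
  have := Functor.congr_hom h1 (F.map q)
  simp only [Functor.comp_obj, Functor.comp_map, Functor.id_obj, Functor.id_map] at this ⊢
  rw [this]
  simp [eqToHom_map]

lemma bij_map_transport (G : C ⥤ D) {P Q P' Q' : C} (α : P ≅ P') (β : Q ≅ Q')
    (h : Bijective (fun g : P ⟶ Q => G.map g)) :
    Bijective (fun g : P' ⟶ Q' => G.map g) := by
  have key : (fun g : P' ⟶ Q' => G.map g) =
      (fun t : G.obj P ⟶ G.obj Q => (G.mapIso α).inv ≫ t ≫ (G.mapIso β).hom) ∘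
        (fun g : P ⟶ Q => G.map g) ∘ (fun g : P' ⟶ Q' => α.hom ≫ g ≫ β.inv) := by
    funext g
    simp
  rw [key]
  exact (((G.mapIso α).homCongr (G.mapIso β)).bijective.comp h).comp
    ((α.homCongr β).symm.bijective)

lemma pi_map_bijective {ι : Type*} {S T : ι → Type*} (m : ∀ i, S i → T i)
    (h : ∀ i, Bijective (m i)) :
    Bijective (fun (s : ∀ i, S i) (i : ι) => m i (s i)) := by
  constructor
  · intro a b hab
    funext i
    exact (h i).1 (congrFun hab i)
  · intro t
    exact ⟨fun i => ((h i).2 (t i)).choose, funext fun i => ((h i).2 (t i)).choose_spec⟩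

lemma pi_map_bijective_factor {ι : Type*} {S T : ι → Type*} (m : ∀ i, S i → T i)
    (h : Bijective (fun (s : ∀ i, S i) (i : ι) => m i (s i)))
    (k₀ : ι) (hne : ∀ k, k ≠ k₀ → Nonempty (S k)) : Bijective (m k₀) := by
  classical
  constructor
  · intro a b hab
    set sa : ∀ i, S i := fun i => if hi : i = k₀ then hi ▸ a else (hne i hi).some with hsa
    set sb : ∀ i, S i := fun i => if hi : i = k₀ then hi ▸ b else (hne i hi).some with hsb
    have key : (fun i => m i (sa i)) = (fun i => m i (sb i)) := by
      funext i
      by_cases hi : i = k₀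
      · subst hi; simp [hsa, hsb, hab]
      · simp [hsa, hsb, hi]
    have := congrFun (h.1 key) k₀
    simpa [hsa, hsb] using this
  · intro t
    set tt : ∀ i, T i := fun i =>
      if hi : i = k₀ then hi ▸ t else m i ((hne i hi).some) with htt
    obtain ⟨s, hs⟩ := h.2 tt
    refine ⟨s k₀, ?_⟩
    have := congrFun hs k₀
    simpa [htt] using this

end Helpers

section Fib

variable {K K' : Type u}

/-- The fiber of `W : B ⟶ Discrete K` over `k`, as a full subcategory. -/
abbrev Fib {B : Cat.{u, u}} (W : B ⟶ Cat.of (Discrete K)) (k : K) : Cat.{u, u} :=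
  Cat.of (ObjectProperty.FullSubcategory (fun b : B => W.toFunctor.obj b = Discrete.mk k))

/-- Inclusion of a fiber. -/
def fibIncl {B : Cat.{u, u}} (W : B ⟶ Cat.of (Discrete K)) (k : K) : Fib W k ⟶ B :=
  (ObjectProperty.ι _).toCatHom

/-- Functoriality of fibers for a square over a map of index sets. -/
def fibMap {A B : Cat.{u, u}} (φ : K → K') (F : A ⟶ B) (W_A : A ⟶ Cat.of (Discrete K))
    (W_B : B ⟶ Cat.of (Discrete K')) (hF : F ≫ W_B = W_A ≫ discMap φ) (k : K) :
    Fib W_A k ⟶ Fib W_B (φ k) := Functor.toCatHom {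
  obj a := ⟨F.toFunctor.obj a.obj, by
    have h1 := Functor.congr_obj (congrArg Cat.Hom.toFunctor hF) a.obj
    simp only [Cat.Hom.comp_toFunctor, Functor.comp_obj] at h1
    rw [h1, a.property]
    rfl⟩
  map g := ObjectProperty.homMk (F.toFunctor.map g.hom)
  map_id a := by ext; exact F.toFunctor.map_id a.obj
  map_comp g h := by ext; exact F.toFunctor.map_comp g.hom h.hom }

lemma fibMap_incl {A B : Cat.{u, u}} (φ : K → K') (F : A ⟶ B) (W_A : A ⟶ Cat.of (Discrete K))
    (W_B : B ⟶ Cat.of (Discrete K')) (hF : F ≫ W_B = W_A ≫ discMap φ) (k : K) :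
    (fibMap φ F W_A W_B hF k ≫ fibIncl W_B (φ k) : Fib W_A k ⟶ B) = fibIncl W_A k ≫ F :=
  rfl

lemma fibMap_comp {A B C : Cat.{u, u}} {K'' : Type u} (φ : K → K') (ψ : K' → K'')
    (F : A ⟶ B) (G : B ⟶ C) (W_A : A ⟶ Cat.of (Discrete K)) (W_B : B ⟶ Cat.of (Discrete K'))
    (W_C : C ⟶ Cat.of (Discrete K'')) (hF : F ≫ W_B = W_A ≫ discMap φ)
    (hG : G ≫ W_C = W_B ≫ discMap ψ) (hFG : (F ≫ G) ≫ W_C = W_A ≫ discMap (fun k => ψ (φ k)))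
    (k : K) :
    (fibMap φ F W_A W_B hF k ≫ fibMap ψ G W_B W_C hG (φ k) : Fib W_A k ⟶ Fib W_C (ψ (φ k))) =
      fibMap (fun k => ψ (φ k)) (F ≫ G) W_A W_C hFG k :=
  rfl

lemma fibMap_congr {A B : Cat.{u, u}} (φ : K → K') (F F' : A ⟶ B) (hFF : F = F')
    (W_A : A ⟶ Cat.of (Discrete K)) (W_B : B ⟶ Cat.of (Discrete K'))
    (hF : F ≫ W_B = W_A ≫ discMap φ) (hF' : F' ≫ W_B = W_A ≫ discMap φ) (k : K) :
    fibMap φ F W_A W_B hF k = fibMap φ F' W_A W_B hF' k := by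
  subst hFF; rfl

end Fib

end Derivator
namespace Derivator
open Function

section Pt

variable {K K' : Type u}

/-- The point category over `k : K`: the fiber of the identity of `Discrete K`. -/
abbrev Pt (K : Type u) (k : K) : Cat.{u, u} := Fib (𝟙 (Cat.of (Discrete K))) k

lemma discHom_eq {α : Type u} {X Y : ↑(Cat.of (Discrete α))} (f g : X ⟶ Y) : f = g := by
  obtain ⟨⟨p⟩⟩ := f
  obtain ⟨⟨q⟩⟩ := g
  rfl

lemma ptHom_eq {k : K} {x y : Pt K k} (f g : x ⟶ y) : f = g := by
  obtain ⟨⟨⟨p⟩⟩⟩ := f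
  obtain ⟨⟨⟨q⟩⟩⟩ := g
  rfl

/-- Inclusion of the point category. -/
def ptIncl (K : Type u) (k : K) : Pt K k ⟶ Cat.of (Discrete K) :=
  fibIncl (𝟙 (Cat.of (Discrete K))) k

lemma ptObj_eq {k : K} (x : Pt K k) : x = ⟨Discrete.mk k, rfl⟩ := by
  obtain ⟨o, p⟩ := x
  have : o = Discrete.mk k := p
  subst this
  rfl

lemma functor_ext_hsub {C D : Type*} [Category C] [Category D] {F G : C ⥤ D}
    (hsub : ∀ (x y : D) (f g : x ⟶ y), f = g) (h : ∀ X, F.obj X = G.obj X) : F = G :=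
  CategoryTheory.Functor.ext h (fun _ _ f => hsub _ _ _ _)

lemma comp_discMap_id {B : Cat.{u, u}} (W : B ⟶ Cat.of (Discrete K)) :
    W ≫ discMap (fun k : K => k) = W :=
  Cat.ext (functor_ext_hsub (fun _ _ f g => discHom_eq f g) (fun _ => rfl))

/-- The structure functor from a fiber to the point category. -/
def qFib {B : Cat.{u, u}} (W : B ⟶ Cat.of (Discrete K)) (k : K) : Fib W k ⟶ Pt K k :=
  fibMap (fun k => k) W W (𝟙 _) (by rw [Category.comp_id, comp_discMap_id]) k

/-- The functor `Pt K k ⟶ Pt K' (φ k)` induced by `φ`. -/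
def ptMap (φ : K → K') (k : K) : Pt K k ⟶ Pt K' (φ k) :=
  fibMap φ (discMap φ) (𝟙 _) (𝟙 _) (by rw [Category.comp_id, Category.id_comp]) k

/-- The constant functor between point categories. -/
def ptTrans (k : K) (k' : K') : Pt K k ⟶ Pt K' k' := Functor.toCatHom {
  obj _ := ⟨Discrete.mk k', rfl⟩
  map _ := 𝟙 _
  map_id _ := rfl
  map_comp _ _ := (Category.id_comp _).symm }

lemma ptMap_ptTrans (φ : K → K') (k : K) : ptMap φ k ≫ ptTrans (φ k) k = 𝟙 (Pt K k) :=
  Cat.ext (functor_ext_hsub (fun _ _ f g => ptHom_eq f g)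
    (fun x => ((ptObj_eq x).symm : _)))

lemma ptTrans_ptMap (φ : K → K') (k : K) : ptTrans (φ k) k ≫ ptMap φ k = 𝟙 (Pt K' (φ k)) :=
  Cat.ext (functor_ext_hsub (fun _ _ f g => ptHom_eq f g)
    (fun x => ((ptObj_eq x).symm : _)))

end Pt

end Derivator
-- Sigma decomposition machinery
namespace Derivator
variable {K : Type u} {B : Cat.{u, u}} (W : B ⟶ Cat.of (Discrete K))

abbrev SigmaFib : Cat.{u, u} := Cat.of (Σ k : K, (Fib W k : Type u))

def fromSigma : SigmaFib W ⟶ B := (Sigma.desc (fun k => (fibIncl W k).toFunctor)).toCatHom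

lemma incl_fromSigma (k : K) :
    ((Sigma.incl (C := fun k => (Fib W k : Type u)) k).toCatHom ≫ fromSigma W :
      Fib W k ⟶ B) = fibIncl W k := rfl

def fibHomMk {k k' : K} (e : k = k') (x : Fib W k) (y : Fib W k') (g : x.obj ⟶ y.obj) :
    (⟨k, x⟩ : Σ k : K, (Fib W k : Type u)) ⟶ ⟨k', y⟩ := by
  subst e
  exact Sigma.SigmaHom.mk (ObjectProperty.homMk g : x ⟶ y)

lemma discHomAs {α : Type u} {X Y : ↑(Cat.of (Discrete α))} (g : X ⟶ Y) : X.as = Y.as := by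
  obtain ⟨⟨p⟩⟩ := g
  exact p

lemma fibHomMk_id {k : K} (e : k = k) (x : Fib W k) :
    fibHomMk W e x x (𝟙 x.obj) = 𝟙 (⟨k, x⟩ : Σ k : K, (Fib W k : Type u)) := rfl

lemma fibHomMk_comp {k k' k'' : K} (e1 : k = k') (e2 : k' = k'')
    (x : Fib W k) (y : Fib W k') (z : Fib W k'') (g : x.obj ⟶ y.obj) (g' : y.obj ⟶ z.obj) :
    fibHomMk W e1 x y g ≫ fibHomMk W e2 y z g' = fibHomMk W (e1.trans e2) x z (g ≫ g') := by
  subst e1; subst e2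
  rfl

def toSigma : B ⟶ SigmaFib W := Functor.toCatHom {
  obj b := ⟨(W.toFunctor.obj b).as, ⟨b, rfl⟩⟩
  map {b b'} g := fibHomMk W (discHomAs (W.toFunctor.map g)) ⟨b, rfl⟩ ⟨b', rfl⟩ g
  map_id b := fibHomMk_id W (discHomAs (W.toFunctor.map (𝟙 b))) ⟨b, rfl⟩
  map_comp {b b' b''} g g' :=
    (fibHomMk_comp W (discHomAs (W.toFunctor.map g)) (discHomAs (W.toFunctor.map g')) ⟨b, rfl⟩ ⟨b', rfl⟩
      ⟨b'', rfl⟩ g g').symm }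

end Derivator
namespace Derivator
variable {K : Type u} {B : Cat.{u, u}} (W : B ⟶ Cat.of (Discrete K))

lemma fromSigma_map_fibHomMk {k k' : K} (e : k = k') (x : Fib W k) (y : Fib W k')
    (g : x.obj ⟶ y.obj) :
    (fromSigma W).toFunctor.map (fibHomMk W e x y g) = g := by
  subst e
  rfl

lemma toSigma_fromSigma :
    (toSigma W).toFunctor ⋙ (fromSigma W).toFunctor = 𝟭 ↑B := by
  refine CategoryTheory.Functor.ext (fun b => rfl) (fun b b' g => ?_)
  show (fromSigma W).toFunctor.map
    (fibHomMk W (discHomAs (W.toFunctor.map g)) ⟨b, rfl⟩ ⟨b', rfl⟩ g) = _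
  refine (fromSigma_map_fibHomMk W (discHomAs (W.toFunctor.map g)) ⟨b, rfl⟩ ⟨b', rfl⟩ g).trans ?_
  simp
  change g = 𝟙 b ≫ g ≫ 𝟙 b'
  simp

lemma fromSigma_faithful : (fromSigma W).toFunctor.Faithful := by
  constructor
  intro (P : Σ k, (Fib W k : Type u)) (Q : Σ k, (Fib W k : Type u)) (q : Sigma.SigmaHom P Q)
    (q' : Sigma.SigmaHom P Q) hqq
  cases q with
  | mk g =>
    cases q' with
    | mk g' =>
      have : g = g' := (ObjectProperty.ι _).map_injective hqq
      rw [this]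

lemma fromSigma_toSigma :
    (fromSigma W).toFunctor ⋙ (toSigma W).toFunctor =
      𝟭 ↑(SigmaFib W) := by
  haveI := fromSigma_faithful W
  refine comp_eq_id_of_obj (fromSigma W).toFunctor
    (toSigma W).toFunctor (toSigma_fromSigma W) ?_
  rintro ⟨k, ⟨b, hb⟩⟩
  have e : (W.toFunctor.obj b).as = k := congrArg Discrete.as hb
  subst e
  rfl

lemma toSigma_fromSigma_cell : toSigma W ≫ fromSigma W = 𝟙 B := Cat.ext (toSigma_fromSigma W)

lemma fromSigma_toSigma_cell : fromSigma W ≫ toSigma W = 𝟙 (SigmaFib W) := Cat.ext (fromSigma_toSigma W)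

end Derivator
namespace Derivator
open Function

section DiaDec

variable (D : PreDer.{u})

/-- Restriction along a strict isomorphism of categories is an equivalence. -/
def resEquivOfInv {C₁ C₂ : Cat.{u, u}} (φ : C₁ ⟶ C₂) (ψ : C₂ ⟶ C₁)
    (h1 : φ ≫ ψ = 𝟙 C₁) (h2 : ψ ≫ φ = 𝟙 C₂) : D.Dia C₂ ≌ D.Dia C₁ :=
  CategoryTheory.Equivalence.mk (D.res φ) (D.res ψ)
    (eqToIso (show 𝟭 (D.Dia C₂) = D.res φ ⋙ D.res ψ by
      rw [← D.res_comp, h2, D.res_id]))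
    (eqToIso (show D.res ψ ⋙ D.res φ = 𝟭 (D.Dia C₁) by
      rw [← D.res_comp, h1, D.res_id]))

lemma res_isEquiv_of_inv {C₁ C₂ : Cat.{u, u}} (φ : C₁ ⟶ C₂) (ψ : C₂ ⟶ C₁)
    (h1 : φ ≫ ψ = 𝟙 C₁) (h2 : ψ ≫ φ = 𝟙 C₂) : (D.res φ).IsEquivalence :=
  (resEquivOfInv D φ ψ h1 h2).isEquivalence_functor

lemma res_map_bijective_of_inv {C₁ C₂ : Cat.{u, u}} (φ : C₁ ⟶ C₂) (ψ : C₂ ⟶ C₁)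
    (h1 : φ ≫ ψ = 𝟙 C₁) (h2 : ψ ≫ φ = 𝟙 C₂) (P Q : D.Dia C₂) :
    Bijective (fun g : P ⟶ Q => (D.res φ).map g) := by
  haveI := res_isEquiv_of_inv D φ ψ h1 h2
  exact ⟨fun _ _ hh => (D.res φ).map_injective hh, (D.res φ).map_surjective⟩

lemma der1_split (K : Type u) :
    ∀ (β : Type u) (f : β → K), Function.Surjective f → ∃ g : K → β, ∀ i, f (g i) = i :=
  fun _ f hf => ⟨fun i => (hf i).choose, fun i => (hf i).choose_spec⟩

variable {K : Type u} {B : Cat.{u, u}} (W : B ⟶ Cat.of (Discrete K))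

/-- The comparison functor from diagrams on `B` to families of diagrams on the fibers. -/
def diaDec : D.Dia B ⥤ ∀ k, D.Dia (Fib W k) :=
  D.res (fromSigma W) ⋙
    Functor.pi' (fun k => D.res (A := Fib W k) (B := SigmaFib W)
      (Sigma.incl (C := fun k => (Fib W k : Type u)) k).toCatHom)

lemma res_fibIncl_eq (k : K) :
    D.res (fibIncl W k) =
      D.res (fromSigma W) ⋙ D.res (A := Fib W k) (B := SigmaFib W)
        (Sigma.incl (C := fun k => (Fib W k : Type u)) k).toCatHom := by
  exact (congrArg D.res (incl_fromSigma W k)).symm.trans (D.res_comp _ _)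

lemma diaDec_isEquiv (hD1 : Der1 D) : (diaDec D W).IsEquivalence := by
  haveI h1 : (D.res (fromSigma W)).IsEquivalence :=
    res_isEquiv_of_inv D _ _ (fromSigma_toSigma_cell W) (toSigma_fromSigma_cell W)
  haveI h2 : (Functor.pi' (fun k => D.res (A := Fib W k) (B := SigmaFib W)
      (Sigma.incl (C := fun k => (Fib W k : Type u)) k).toCatHom)).IsEquivalence :=
    hD1 K (der1_split K) (fun k => Fib W k)
  unfold diaDec
  infer_instance

lemma psi_bijective (hD1 : Der1 D) (P Q : D.Dia B) :
    Bijective (fun (g : P ⟶ Q) (k : K) => (D.res (fibIncl W k)).map g) := by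
  haveI := diaDec_isEquiv D W hD1
  have hPhi : Bijective (fun g : P ⟶ Q => (diaDec D W).map g) :=
    ⟨fun _ _ hh => (diaDec D W).map_injective hh, (diaDec D W).map_surjective⟩
  have key : (fun (g : P ⟶ Q) (k : K) => (D.res (fibIncl W k)).map g) =
      (fun (t : (diaDec D W).obj P ⟶ (diaDec D W).obj Q) (k : K) =>
        eqToHom (Functor.congr_obj (res_fibIncl_eq D W k) P) ≫ t k ≫
          eqToHom (Functor.congr_obj (res_fibIncl_eq D W k) Q).symm) ∘
      (fun g : P ⟶ Q => (diaDec D W).map g) := by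
    funext g
    funext k
    exact Functor.congr_hom (res_fibIncl_eq D W k) g
  rw [key]
  refine Function.Bijective.comp ?_ hPhi
  exact pi_map_bijective _ (fun k =>
    ((eqToIso (Functor.congr_obj (res_fibIncl_eq D W k) P).symm).homCongr
      (eqToIso (Functor.congr_obj (res_fibIncl_eq D W k) Q).symm)).bijective)

lemma dia_realize (hD1 : Der1 D) (t : ∀ k, D.Dia (Fib W k)) :
    ∃ X : D.Dia B, ∀ k, Nonempty ((D.res (fibIncl W k)).obj X ≅ t k) := by
  haveI := diaDec_isEquiv D W hD1
  refine ⟨(diaDec D W).objPreimage t, fun k => ⟨?_⟩⟩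
  exact eqToIso (Functor.congr_obj (res_fibIncl_eq D W k) _) ≪≫
    Pi.isoApp ((diaDec D W).objObjPreimageIso t) k

end DiaDec

end Derivator
namespace Derivator
open Function

section Core

variable (D : PreDer.{u}) {K : Type u} {A B : Cat.{u, u}} (F : A ⟶ B)
  (V : B ⟶ Cat.of (Discrete K))

/-- The fiberwise functor induced by `F` over `K`. -/
def fibF (k : K) : Fib (F ≫ V) k ⟶ Fib V k :=
  fibMap (fun k => k) F (F ≫ V) V (by rw [comp_discMap_id]) k

lemma fibF_incl (k : K) :
    (fibF F V k ≫ fibIncl V k : Fib (F ≫ V) k ⟶ B) = fibIncl (F ≫ V) k ≫ F :=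
  fibMap_incl _ _ _ _ _ _

lemma qFib_incl (k : K) :
    (qFib V k ≫ ptIncl K k : Fib V k ⟶ Cat.of (Discrete K)) = fibIncl V k ≫ V :=
  fibMap_incl _ _ _ _ _ _

lemma res_nat_eq (k : K) :
    D.res F ⋙ D.res (fibIncl (F ≫ V) k) = D.res (fibIncl V k) ⋙ D.res (fibF F V k) := by
  rw [← D.res_comp (fibIncl (F ≫ V) k) F, ← D.res_comp (fibF F V k) (fibIncl V k), fibF_incl]

lemma res_obj_comp {C₁ C₂ C₃ : Cat.{u, u}} (u : C₁ ⟶ C₂) (v : C₂ ⟶ C₃) (X : D.Dia C₃) :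
    (D.res u).obj ((D.res v).obj X) = (D.res (u ≫ v)).obj X :=
  (Functor.congr_obj (D.res_comp u v) X).symm

lemma fib_obj_eq (k : K) (X : D.Dia (Cat.of (Discrete K))) :
    (D.res (fibIncl V k)).obj ((D.res V).obj X) =
      (D.res (qFib V k)).obj ((D.res (ptIncl K k)).obj X) := by
  rw [res_obj_comp, res_obj_comp, qFib_incl]

lemma core_iff (hD1 : Der1 D) (X Y : D.Dia (Cat.of (Discrete K))) :
    Bijective (fun g : (D.res V).obj X ⟶ (D.res V).obj Y => (D.res F).map g) ↔
      Bijective (fun (gs : ∀ k, ((D.res (fibIncl V k)).obj ((D.res V).obj X) ⟶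
          (D.res (fibIncl V k)).obj ((D.res V).obj Y))) (k : K) =>
        (D.res (fibF F V k)).map (gs k)) := by
  set P := (D.res V).obj X with hP
  set Q := (D.res V).obj Y with hQ
  have hA := psi_bijective D (F ≫ V) hD1 ((D.res F).obj P) ((D.res F).obj Q)
  have hB := psi_bijective D V hD1 P Q
  rw [← Function.Bijective.of_comp_iff' hA (fun g : P ⟶ Q => (D.res F).map g)]
  have hcomp :
      ((fun (g : (D.res F).obj P ⟶ (D.res F).obj Q) (k : K) =>
          (D.res (fibIncl (F ≫ V) k)).map g) ∘ (fun g : P ⟶ Q => (D.res F).map g)) =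
        (fun (ts : ∀ k, ((D.res (fibF F V k)).obj ((D.res (fibIncl V k)).obj P) ⟶
            (D.res (fibF F V k)).obj ((D.res (fibIncl V k)).obj Q))) (k : K) =>
          eqToHom (Functor.congr_obj (res_nat_eq D F V k) P) ≫ ts k ≫
            eqToHom (Functor.congr_obj (res_nat_eq D F V k) Q).symm) ∘
        ((fun (gs : ∀ k, ((D.res (fibIncl V k)).obj P ⟶ (D.res (fibIncl V k)).obj Q)) (k : K) =>
          (D.res (fibF F V k)).map (gs k)) ∘
          (fun (g : P ⟶ Q) (k : K) => (D.res (fibIncl V k)).map g)) := by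
    funext g
    funext k
    exact Functor.congr_hom (res_nat_eq D F V k) g
  rw [hcomp]
  have hconj : Bijective
      (fun (ts : ∀ k, ((D.res (fibF F V k)).obj ((D.res (fibIncl V k)).obj P) ⟶
          (D.res (fibF F V k)).obj ((D.res (fibIncl V k)).obj Q))) (k : K) =>
        eqToHom (Functor.congr_obj (res_nat_eq D F V k) P) ≫ ts k ≫
          eqToHom (Functor.congr_obj (res_nat_eq D F V k) Q).symm) :=
    pi_map_bijective _ (fun k =>
      ((eqToIso (Functor.congr_obj (res_nat_eq D F V k) P).symm).homCongr
        (eqToIso (Functor.congr_obj (res_nat_eq D F V k) Q).symm)).bijective)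
  rw [Function.Bijective.of_comp_iff' hconj]
  rw [Function.Bijective.of_comp_iff _ hB]

/-- The fiberwise statement of being a `D`-equivalence. -/
def FibClaim (k : K) : Prop :=
  ∀ x y : D.Dia (Pt K k),
    Bijective (fun g : (D.res (qFib V k)).obj x ⟶ (D.res (qFib V k)).obj y =>
      (D.res (fibF F V k)).map g)

lemma isDEquiv_of_fibClaim (hD1 : Der1 D) (hfc : ∀ k, FibClaim D F V k) :
    IsDEquiv D K F V := by
  intro X Y
  refine (core_iff D F V hD1 X Y).mpr ?_
  refine pi_map_bijective _ (fun k => ?_)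
  exact bij_map_transport _ (eqToIso (fib_obj_eq D V k X).symm)
    (eqToIso (fib_obj_eq D V k Y).symm)
    (hfc k ((D.res (ptIncl K k)).obj X) ((D.res (ptIncl K k)).obj Y))

lemma fibClaim_of_isDEquiv (hD1 : Der1 D) (h : IsDEquiv D K F V) (k₀ : K) :
    FibClaim D F V k₀ := by
  classical
  intro x y
  set t_x : ∀ k, D.Dia (Pt K k) :=
    Function.update (fun k => (D.res (ptTrans k k₀)).obj x) k₀ x with htx
  set t_y : ∀ k, D.Dia (Pt K k) :=
    Function.update (fun k => (D.res (ptTrans k k₀)).obj x) k₀ y with hty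
  obtain ⟨X, hX⟩ := dia_realize D (𝟙 (Cat.of (Discrete K))) hD1 t_x
  obtain ⟨Y, hY⟩ := dia_realize D (𝟙 (Cat.of (Discrete K))) hD1 t_y
  have hfac := (core_iff D F V hD1 X Y).mp (h X Y)
  have hne : ∀ k, k ≠ k₀ → Nonempty ((D.res (fibIncl V k)).obj ((D.res V).obj X) ⟶
      (D.res (fibIncl V k)).obj ((D.res V).obj Y)) := by
    intro k hk
    have e : t_x k = t_y k := by simp [htx, hty, Function.update_of_ne hk]
    refine ⟨eqToHom (fib_obj_eq D V k X) ≫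
      (D.res (qFib V k)).map ((hX k).some.hom ≫ eqToHom e ≫ (hY k).some.inv) ≫
      eqToHom (fib_obj_eq D V k Y).symm⟩
  have hfactor := pi_map_bijective_factor
    (fun k (g : ((D.res (fibIncl V k)).obj ((D.res V).obj X) ⟶
      (D.res (fibIncl V k)).obj ((D.res V).obj Y))) => (D.res (fibF F V k)).map g)
    hfac k₀ hne
  have ix : (D.res (ptIncl K k₀)).obj X ≅ x :=
    (hX k₀).some ≪≫ eqToIso (by simp [htx])
  have iy : (D.res (ptIncl K k₀)).obj Y ≅ y :=
    (hY k₀).some ≪≫ eqToIso (by simp [hty])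
  exact bij_map_transport _
    (eqToIso (fib_obj_eq D V k₀ X) ≪≫ (D.res (qFib V k₀)).mapIso ix)
    (eqToIso (fib_obj_eq D V k₀ Y) ≪≫ (D.res (qFib V k₀)).mapIso iy) hfactor

end Core

end Derivator
namespace Derivator
open Function

section Gamma

variable {I J : Type u} (f : I → J) {Bc : Cat.{u, u}} (Vc : Bc ⟶ Cat.of (Discrete J))

/-- Extensionality for objects of a full subcategory. -/
lemma fullsub_ext {C : Type*} [Category C] {Z : C → Prop} (x y : ObjectProperty.FullSubcategory Z)
    (h : x.obj = y.obj) : x = y := by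
  cases x
  cases y
  cases h
  rfl

/-- The strict pullback as an object of `Cat`. -/
abbrev PBCat : Cat.{u, u} :=
  Cat.of (CatPB (((discMap f).toFunctor : Discrete I ⥤ Discrete J)) ((Vc.toFunctor : ↑Bc ⥤ Discrete J)))

/-- The first projection of the strict pullback, as a 1-cell. -/
abbrev pbFst : PBCat f Vc ⟶ Cat.of (Discrete I) :=
  (CatPB.fst (((discMap f).toFunctor : Discrete I ⥤ Discrete J)) ((Vc.toFunctor : ↑Bc ⥤ Discrete J))).toCatHom

/-- The second projection of the strict pullback. -/
def pbSnd : PBCat f Vc ⟶ Bc := Functor.toCatHom {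
  obj x := x.b
  map g := g.1.2
  map_id _ := rfl
  map_comp _ _ := rfl }

lemma pbSnd_comm : (pbSnd f Vc ≫ Vc : PBCat f Vc ⟶ Cat.of (Discrete J)) =
    pbFst f Vc ≫ discMap f :=
  Cat.ext (functor_ext_hsub (fun _ _ g g' => discHom_eq g g') (fun x => x.h.symm))

/-- The comparison functor between the fiber of the pullback over `i` and the fiber of
`Vc` over `f i`. -/
def gammaF (i : I) : Fib (pbFst f Vc) i ⟶ Fib Vc (f i) :=
  fibMap f (pbSnd f Vc) (pbFst f Vc) Vc (pbSnd_comm f Vc) i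

/-- The inverse comparison functor. -/
def gammaInv (i : I) : Fib Vc (f i) ⟶ Fib (pbFst f Vc) i := Functor.toCatHom {
  obj b := ⟨⟨Discrete.mk i, b.obj,
    (show ((discMap f).toFunctor : Discrete I ⥤ Discrete J).obj (Discrete.mk i) = Vc.toFunctor.obj b.obj from
      b.property.symm)⟩, rfl⟩
  map {x y} g := ObjectProperty.homMk ⟨(𝟙 (Discrete.mk i), g.hom), discHom_eq _ _⟩
  map_id x := by apply ObjectProperty.hom_ext; apply Subtype.ext; rfl
  map_comp g h := by
    apply ObjectProperty.hom_ext; apply Subtype.ext; rw [Prod.ext_iff]; exact ⟨discHom_eq _ _, rfl⟩ }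

lemma gammaInv_gammaF (i : I) :
    (gammaInv f Vc i).toFunctor ⋙
      (gammaF f Vc i).toFunctor = 𝟭 ↑(Fib Vc (f i)) :=
  rfl

lemma gammaF_faithful (i : I) :
    (gammaF f Vc i).toFunctor.Faithful := by
  constructor
  intro x y g g' hgg
  apply ObjectProperty.hom_ext
  apply Subtype.ext
  rw [Prod.ext_iff]
  exact ⟨discHom_eq _ _, congrArg InducedCategory.Hom.hom hgg⟩

lemma gammaF_gammaInv (i : I) :
    (gammaF f Vc i).toFunctor ⋙
      (gammaInv f Vc i).toFunctor =
      𝟭 ↑(Fib (pbFst f Vc) i) := by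
  haveI := gammaF_faithful f Vc i
  refine comp_eq_id_of_obj _ _ (gammaInv_gammaF f Vc i) ?_
  rintro ⟨⟨c, b, hcb⟩, hc⟩
  have : c = Discrete.mk i := hc
  subst this
  rfl

lemma gammaF_gammaInv_cell (i : I) :
    gammaF f Vc i ≫ gammaInv f Vc i = 𝟙 (Fib (pbFst f Vc) i) :=
  Cat.ext (gammaF_gammaInv f Vc i)

lemma gammaInv_gammaF_cell (i : I) :
    gammaInv f Vc i ≫ gammaF f Vc i = 𝟙 (Fib Vc (f i)) :=
  Cat.ext (gammaInv_gammaF f Vc i)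

/-- Compatibility of the comparison functor with the structure maps to the point. -/
lemma gamma_q_comm (i : I) :
    (gammaF f Vc i ≫ qFib Vc (f i) : Fib (pbFst f Vc) i ⟶ Pt J (f i)) =
      qFib (pbFst f Vc) i ≫ ptMap f i :=
  Cat.ext (functor_ext_hsub (fun _ _ g g' => ptHom_eq g g')
    (fun x => fullsub_ext _ _ x.obj.h.symm))

end Gamma

end Derivator
namespace Derivator
open Function

section Transport

lemma bij_transport_square {C₁ D₁ C₂ D₂ : Type*} [Category C₁] [Category D₁] [Category C₂]
    [Category D₂] (G : C₁ ⥤ D₁) (G' : C₂ ⥤ D₂) (R : C₁ ⥤ C₂) (S : D₁ ⥤ D₂)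
    (hsq : R ⋙ G' = G ⋙ S)
    (hR : ∀ P Q : C₁, Bijective (fun g : P ⟶ Q => R.map g))
    (hS : ∀ P Q : D₁, Bijective (fun g : P ⟶ Q => S.map g))
    (P Q : C₁) (h : Bijective (fun g : P ⟶ Q => G.map g)) :
    Bijective (fun g : R.obj P ⟶ R.obj Q => G'.map g) := by
  have hcomp : ((fun g : R.obj P ⟶ R.obj Q => G'.map g) ∘ (fun g : P ⟶ Q => R.map g)) =
      (fun t : S.obj (G.obj P) ⟶ S.obj (G.obj Q) =>
        eqToHom (Functor.congr_obj hsq P) ≫ t ≫ eqToHom (Functor.congr_obj hsq Q).symm) ∘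
      ((fun g : G.obj P ⟶ G.obj Q => S.map g) ∘ (fun g : P ⟶ Q => G.map g)) := by
    funext g
    exact Functor.congr_hom hsq g
  have h1 : Bijective ((fun g : R.obj P ⟶ R.obj Q => G'.map g) ∘
      (fun g : P ⟶ Q => R.map g)) := by
    rw [hcomp]
    exact (((eqToIso (Functor.congr_obj hsq P).symm).homCongr
      (eqToIso (Functor.congr_obj hsq Q).symm)).bijective).comp ((hS _ _).comp h)
  exact (Function.Bijective.of_comp_iff _ (hR P Q)).mp h1

variable (D : PreDer.{u}) {I J : Type u} (f : I → J) {A B : Cat.{u, u}} (F : A ⟶ B)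
  (V : B ⟶ Cat.of (Discrete J))

lemma fibClaim_pullback (i : I) (hJ : FibClaim D F V (f i)) :
    FibClaim (A := PBCat f (F ≫ V)) (B := PBCat f V) D (pbFunctor f F V).toCatHom (pbFst f V) i := by
  intro x y
  have hb := hJ ((D.res (ptTrans (f i) i)).obj x) ((D.res (ptTrans (f i) i)).obj y)
  have hsq : D.res (gammaF f V i) ⋙
      D.res (fibF (A := PBCat f (F ≫ V)) (B := PBCat f V) (pbFunctor f F V).toCatHom (pbFst f V) i) =
      D.res (fibF F V (f i)) ⋙ D.res (gammaF f (F ≫ V) i) := by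
    rw [← D.res_comp, ← D.res_comp]
    rfl
  have ht := bij_transport_square (D.res (fibF F V (f i)))
    (D.res (fibF (A := PBCat f (F ≫ V)) (B := PBCat f V) (pbFunctor f F V).toCatHom (pbFst f V) i))
    (D.res (gammaF f V i)) (D.res (gammaF f (F ≫ V) i)) hsq
    (fun P Q => res_map_bijective_of_inv D _ _ (gammaF_gammaInv_cell f V i)
      (gammaInv_gammaF_cell f V i) P Q)
    (fun P Q => res_map_bijective_of_inv D _ _ (gammaF_gammaInv_cell f (F ≫ V) i)
      (gammaInv_gammaF_cell f (F ≫ V) i) P Q)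
    _ _ hb
  have hinner : ∀ z : D.Dia (Pt I i),
      (D.res (ptMap f i)).obj ((D.res (ptTrans (f i) i)).obj z) = z := by
    intro z
    rw [res_obj_comp, ptMap_ptTrans, D.res_id]
    rfl
  have hobj : ∀ z : D.Dia (Pt I i),
      (D.res (gammaF f V i)).obj ((D.res (qFib V (f i))).obj
        ((D.res (ptTrans (f i) i)).obj z)) = (D.res (qFib (pbFst f V) i)).obj z := by
    intro z
    calc (D.res (gammaF f V i)).obj ((D.res (qFib V (f i))).obj
          ((D.res (ptTrans (f i) i)).obj z))
        = (D.res ((gammaF f V i ≫ qFib V (f i) : Fib (pbFst f V) i ⟶ Pt J (f i)))).obj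
            ((D.res (ptTrans (f i) i)).obj z) := res_obj_comp D _ _ _
      _ = (D.res (qFib (pbFst f V) i ≫ ptMap f i)).obj
            ((D.res (ptTrans (f i) i)).obj z) := by rw [gamma_q_comm]
      _ = (D.res (qFib (pbFst f V) i)).obj ((D.res (ptMap f i)).obj
            ((D.res (ptTrans (f i) i)).obj z)) := (res_obj_comp D _ _ _).symm
      _ = (D.res (qFib (pbFst f V) i)).obj z := by rw [hinner]
  exact bij_map_transport _ (eqToIso (hobj x)) (eqToIso (hobj y)) ht

end Transport

end Derivator
open Derivator in
/-- If `f : I → J` is a function between sets and `u : A ⟶ B` is a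
`D`-equivalence over `J` for a left derivator `D`, then the pullback
`f^*(u) : f^*A ⟶ f^*B` is a `D`-equivalence over `I`. -/
theorem pullback_dEquiv
    (D : PreDer.{u}) (L : LanData D) (hD : IsLeftDerivator D L)
    {I J : Type u} (f : I → J) {A B : Cat.{u, u}} (F : A ⟶ B)
    (V : B ⟶ Cat.of (Discrete J)) (h : IsDEquiv D J F V) :
    IsDEquiv D I
      (A := Cat.of (CatPB (((discMap f).toFunctor : Discrete I ⥤ Discrete J)) (((F ≫ V).toFunctor : ↑A ⥤ Discrete J))))
      (B := Cat.of (CatPB (((discMap f).toFunctor : Discrete I ⥤ Discrete J)) ((V.toFunctor : ↑B ⥤ Discrete J))))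
      (pbFunctor f F V).toCatHom
      (CatPB.fst (((discMap f).toFunctor : Discrete I ⥤ Discrete J)) ((V.toFunctor : ↑B ⥤ Discrete J))).toCatHom := by
  obtain ⟨hD1, -, -⟩ := hD
  refine isDEquiv_of_fibClaim
    (A := Cat.of (CatPB (((discMap f).toFunctor : Discrete I ⥤ Discrete J)) (((F ≫ V).toFunctor : ↑A ⥤ Discrete J))))
    (B := Cat.of (CatPB (((discMap f).toFunctor : Discrete I ⥤ Discrete J)) ((V.toFunctor : ↑B ⥤ Discrete J))))
    D (pbFunctor f F V).toCatHom
    (CatPB.fst (((discMap f).toFunctor : Discrete I ⥤ Discrete J)) ((V.toFunctor : ↑B ⥤ Discrete J))).toCatHom hD1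
    (fun i => ?_)
  exact fibClaim_pullback D f F V i (fibClaim_of_isDEquiv D F V hD1 h (f i))
end

section
/- For a cocomplete category C regarded as a prederivator via C(A) = C^A, a functor u : A → B over a discrete set I is a C-equivalence over I whenever for each i ∈ I the induced map π0(A_i) → π0(B_i) on connected components of the fibers is a bijection. Conversely, when C = Set, every Set-equivalence over I induces bijections π0(A_i) ≅ π0(B_i) for all i ∈ I. -/
open CategoryTheory Limits

universe v₂ u₂ u

namespace DerivatorEquiv

/-- The map induced on connected components by a functor. -/
def π0Map {J : Type*} {K : Type*} [Category J] [Category K] (F : J ⥤ K) :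
    ConnectedComponents J → ConnectedComponents K :=
  Quotient.lift (fun j => Quotient.mk _ (F.obj j))
    (fun _ _ h => Quotient.sound (zigzag_obj_of_zigzag F h))

/-- The fiber of a category over a discrete set. -/
def Fiber {B : Type u} [Category.{u} B] {I : Type u} (V : B ⥤ Discrete I) (i : I) :=
  ObjectProperty.FullSubcategory (fun b => V.obj b = ⟨i⟩)

instance {B : Type u} [Category.{u} B] {I : Type u} (V : B ⥤ Discrete I) (i : I) :
    Category (Fiber V i) :=
  ObjectProperty.FullSubcategory.category _

/-- The functor induced on fibers by a functor over a discrete set. -/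
def fiberMap {A B : Type u} [Category.{u} A] [Category.{u} B] {I : Type u}
    (F : A ⥤ B) (V : B ⥤ Discrete I) (i : I) : Fiber (F ⋙ V) i ⥤ Fiber V i :=
  ObjectProperty.lift _ (ObjectProperty.ι _ ⋙ F) (fun a => a.2)

/-- `u : A ⥤ B` over the discrete set `I` is a `C`-equivalence over `I`, for the
prederivator represented by a category `C` (with `C(A) = C^A`): restriction along `u`
is fully faithful on the image of restriction along `v`. -/
def IsCEquiv {A B : Type u} [Category.{u} A] [Category.{u} B] {I : Type u}
    (F : A ⥤ B) (V : B ⥤ Discrete I) (C : Type u₂) [Category.{v₂} C] : Prop :=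
  ∀ X Y : Discrete I ⥤ C,
    Function.Bijective (fun g : V ⋙ X ⟶ V ⋙ Y => Functor.whiskerLeft F g)

/-! ### Auxiliary machinery -/

section
variable {B : Type u} [Category.{u} B] {I : Type u} (W : B ⥤ Discrete I)
  {C : Type u₂} [Category.{v₂} C] {X Y : Discrete I ⥤ C}

def cm (g : W ⋙ X ⟶ W ⋙ Y) (i : I) (b : Fiber W i) : X.obj ⟨i⟩ ⟶ Y.obj ⟨i⟩ :=
  eqToHom (congrArg X.obj b.2.symm) ≫ g.app b.1 ≫ eqToHom (congrArg Y.obj b.2)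

lemma cm_hom (g : W ⋙ X ⟶ W ⋙ Y) (i : I) {b b' : Fiber W i} (f : b ⟶ b') :
    cm W g i b = cm W g i b' := by
  have e : W.obj b.1 = W.obj b'.1 := b.2.trans b'.2.symm
  have hW : W.map f.hom = eqToHom e := Subsingleton.elim _ _
  have hnat := g.naturality f.hom
  simp only [Functor.comp_map, hW, eqToHom_map] at hnat
  rw [eqToHom_comp_iff] at hnat
  simp [cm, hnat, eqToHom_trans]

lemma cm_zigzag (g : W ⋙ X ⟶ W ⋙ Y) (i : I) {b b' : Fiber W i} (h : Zigzag b b') :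
    cm W g i b = cm W g i b' := by
  induction h with
  | refl => rfl
  | tail _ z ih =>
    rcases z with ⟨⟨f⟩⟩ | ⟨⟨f⟩⟩
    · exact ih.trans (cm_hom W g i f)
    · exact ih.trans (cm_hom W g i f).symm

def cmQ (g : W ⋙ X ⟶ W ⋙ Y) (i : I) :
    ConnectedComponents (Fiber W i) → (X.obj ⟨i⟩ ⟶ Y.obj ⟨i⟩) :=
  Quotient.lift (cm W g i) (fun _ _ h => cm_zigzag W g i h)

lemma hom_ext {g g' : W ⋙ X ⟶ W ⋙ Y} (h : ∀ i b, cm W g i b = cm W g' i b) :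
    g = g' := by
  apply NatTrans.ext
  funext b
  have := h (W.obj b).as ⟨b, rfl⟩
  simpa [cm] using this

lemma psi_shift (ψ : ∀ i, ConnectedComponents (Fiber W i) → (X.obj ⟨i⟩ ⟶ Y.obj ⟨i⟩))
    (b : B) (j : I) (hj : W.obj b = ⟨j⟩) :
    eqToHom (congrArg X.obj hj) ≫ ψ j (Quotient.mk _ ⟨b, hj⟩) =
      ψ (W.obj b).as (Quotient.mk _ ⟨b, rfl⟩) ≫ eqToHom (congrArg Y.obj hj) := by
  have h' : (W.obj b).as = j := congrArg Discrete.as hj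
  subst h'
  have : hj = rfl := rfl
  rw [this]
  simp

def build (ψ : ∀ i, ConnectedComponents (Fiber W i) → (X.obj ⟨i⟩ ⟶ Y.obj ⟨i⟩)) :
    W ⋙ X ⟶ W ⋙ Y where
  app b := ψ (W.obj b).as (Quotient.mk _ ⟨b, rfl⟩)
  naturality b b' f := by
    have e : W.obj b = W.obj b' := congrArg Discrete.mk (Discrete.eq_of_hom (W.map f))
    have hW : W.map f = eqToHom e := Subsingleton.elim _ _
    show X.map (W.map f) ≫ _ = _ ≫ Y.map (W.map f)
    rw [hW, eqToHom_map, eqToHom_map]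
    have hz : (Quotient.mk _ (⟨b, rfl⟩ : Fiber W (W.obj b).as) :
        ConnectedComponents (Fiber W (W.obj b).as)) = Quotient.mk _ ⟨b', e.symm⟩ :=
      Quotient.sound (Relation.ReflTransGen.single (Or.inl ⟨ObjectProperty.homMk f⟩))
    have hps := psi_shift W ψ b' (W.obj b).as e.symm
    rw [← hz] at hps
    rw [eqToHom_comp_iff] at hps
    rw [hps]
    simp [eqToHom_trans]

lemma build_cm (ψ : ∀ i, ConnectedComponents (Fiber W i) → (X.obj ⟨i⟩ ⟶ Y.obj ⟨i⟩))
    (i : I) (b : Fiber W i) : cm W (build W ψ) i b = ψ i (Quotient.mk _ b) := by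
  obtain ⟨b, hb⟩ := b
  have hps := psi_shift W ψ b i hb
  rw [eqToHom_comp_iff] at hps
  simp [cm, build, hps, eqToHom_trans]

end

lemma cm_whisker {A B : Type u} [Category.{u} A] [Category.{u} B] {I : Type u}
    (F : A ⥤ B) (V : B ⥤ Discrete I) {C : Type u₂} [Category.{v₂} C]
    {X Y : Discrete I ⥤ C} (g : V ⋙ X ⟶ V ⋙ Y) (i : I) (a : Fiber (F ⋙ V) i) :
    cm (F ⋙ V) (Functor.whiskerLeft F g) i a = cm V g i ((fiberMap F V i).obj a) := rfl

lemma forward {C : Type u₂} [Category.{v₂} C]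
    {A B I : Type u} [Category.{u} A] [Category.{u} B]
    (F : A ⥤ B) (V : B ⥤ Discrete I)
    (hb : ∀ i : I, Function.Bijective (π0Map (fiberMap F V i))) : IsCEquiv F V C := by
  intro X Y
  constructor
  · intro g g' hww
    have hww' : Functor.whiskerLeft F g = Functor.whiskerLeft F g' := hww
    apply hom_ext V
    intro i b
    obtain ⟨ca, hca⟩ := (hb i).2 (Quotient.mk _ b)
    obtain ⟨a, rfl⟩ := ca.exists_rep
    suffices hs : cmQ V g i (Quotient.mk _ b) = cmQ V g' i (Quotient.mk _ b) from hs
    rw [← hca]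
    show cm (F ⋙ V) (Functor.whiskerLeft F g) i a = cm (F ⋙ V) (Functor.whiskerLeft F g') i a
    rw [hww']
  · intro h
    refine ⟨build V (fun i c => cmQ (F ⋙ V) h i ((Equiv.ofBijective _ (hb i)).symm c)), ?_⟩
    show Functor.whiskerLeft F _ = h
    apply hom_ext (F ⋙ V)
    intro i a
    rw [cm_whisker, build_cm]
    have h1 : (Quotient.mk _ ((fiberMap F V i).obj a) : ConnectedComponents (Fiber V i)) =
        Equiv.ofBijective _ (hb i) (Quotient.mk _ a) := rfl
    rw [h1]
    exact congrArg (cmQ (F ⋙ V) h i) (Equiv.symm_apply_apply _ _)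

lemma converse {A B I : Type u} [Category.{u} A] [Category.{u} B]
    (F : A ⥤ B) (V : B ⥤ Discrete I) (hce : IsCEquiv F V (Type u)) (i : I) :
    Function.Bijective (π0Map (fiberMap F V i)) := by
  classical
  constructor
  · -- injectivity of π0Map from surjectivity of whiskering
    intro c c' hcc
    let X : Discrete I ⥤ Type u := Discrete.functor (fun _ : I => PUnit.{u+1})
    let Y : Discrete I ⥤ Type u :=
      Discrete.functor (fun j : I => ConnectedComponents (Fiber (F ⋙ V) j))
    let ψ : ∀ j, ConnectedComponents (Fiber (F ⋙ V) j) → (X.obj ⟨j⟩ ⟶ Y.obj ⟨j⟩) :=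
      fun _ d => TypeCat.ofHom (fun _ => d)
    obtain ⟨g, hg⟩ := (hce X Y).2 (build (F ⋙ V) ψ)
    have hg' : Functor.whiskerLeft F g = build (F ⋙ V) ψ := hg
    have key : ∀ x : Fiber (F ⋙ V) i,
        (Quotient.mk _ x : ConnectedComponents (Fiber (F ⋙ V) i)) =
          cmQ V g i (π0Map (fiberMap F V i) (Quotient.mk _ x)) PUnit.unit := by
      intro x
      have h1 := cm_whisker F V g i x
      rw [hg', build_cm] at h1
      exact ConcreteCategory.congr_hom h1 PUnit.unit
    obtain ⟨a, rfl⟩ := c.exists_rep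
    obtain ⟨a', rfl⟩ := c'.exists_rep
    exact (key a).trans ((congrArg (fun d => cmQ V g i d PUnit.unit) hcc).trans (key a').symm)
  · -- surjectivity of π0Map from injectivity of whiskering
    intro c
    by_contra hno
    push_neg at hno
    let X : Discrete I ⥤ Type u := Discrete.functor (fun _ : I => PUnit.{u+1})
    let Y : Discrete I ⥤ Type u :=
      Discrete.functor (fun j : I => Option (ConnectedComponents (Fiber V j)))
    let ψ : ∀ j, ConnectedComponents (Fiber V j) → (X.obj ⟨j⟩ ⟶ Y.obj ⟨j⟩) :=
      fun _ d => TypeCat.ofHom (fun _ => some d)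
    let ψ' : ∀ j, ConnectedComponents (Fiber V j) → (X.obj ⟨j⟩ ⟶ Y.obj ⟨j⟩) :=
      fun j d => TypeCat.ofHom (fun _ => if ∃ ca, π0Map (fiberMap F V j) ca = d then some d else none)
    have hwl : Functor.whiskerLeft F (build V ψ) = Functor.whiskerLeft F (build V ψ') := by
      apply hom_ext (F ⋙ V) (X := X) (Y := Y)
      intro j a
      rw [cm_whisker, cm_whisker, build_cm, build_cm]
      ext u
      have hex : ∃ ca, π0Map (fiberMap F V j) ca =
          (Quotient.mk _ ((fiberMap F V j).obj a) : ConnectedComponents (Fiber V j)) :=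
        ⟨Quotient.mk _ a, rfl⟩
      show some _ = if _ then some _ else none
      rw [if_pos hex]
    have hgg : build V ψ = build V ψ' := (hce X Y).1 hwl
    obtain ⟨b, rfl⟩ := c.exists_rep
    have h1 : cm V (build V ψ) i b = cm V (build V ψ') i b := by rw [hgg]
    rw [build_cm, build_cm] at h1
    have h2 := ConcreteCategory.congr_hom h1 PUnit.unit
    have hneg : ¬ ∃ ca, π0Map (fiberMap F V i) ca =
        (Quotient.mk _ b : ConnectedComponents (Fiber V i)) := by
      rintro ⟨ca, hca⟩
      exact hno ca hca
    rw [show (ψ' i (Quotient.mk _ b) PUnit.unit) = none from if_neg hneg] at h2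
    exact Option.some_ne_none _ h2

end DerivatorEquiv

open DerivatorEquiv in
/-- For a cocomplete category `C` regarded as a prederivator via
`C(A) = C^A`, a functor `u : A ⥤ B` over a discrete set `I` is a `C`-equivalence over
`I` whenever for each `i ∈ I` the induced map `π₀(A_i) → π₀(B_i)` on connected
components of the fibers is a bijection.  Conversely, when `C = Set`, every
`Set`-equivalence over `I` induces bijections `π₀(A_i) ≅ π₀(B_i)` for all `i ∈ I`. -/
theorem isCEquiv_of_pi0_bijective_and_converse_for_Set :
    (∀ (C : Type u₂) [Category.{v₂} C] [HasColimitsOfSize.{u, u} C]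
      (A B I : Type u) [Category.{u} A] [Category.{u} B]
      (F : A ⥤ B) (V : B ⥤ Discrete I),
      (∀ i : I, Function.Bijective (π0Map (fiberMap F V i))) → IsCEquiv F V C) ∧
    (∀ (A B I : Type u) [Category.{u} A] [Category.{u} B]
      (F : A ⥤ B) (V : B ⥤ Discrete I),
      IsCEquiv F V (Type u) → ∀ i : I, Function.Bijective (π0Map (fiberMap F V i))) :=
  ⟨fun _C _ _ _A _B _I _ _ F V hb => forward F V hb,
   fun _A _B _I _ _ F V hce => converse F V hce⟩
end

section
/- The preorder reflection construction E ↦ E_pos(A) defines a derivator when E has small products and coproducts: each E_pos(A) is a (large) preorder, restriction functors have both adjoints given by fiberwise products and coproducts, and axioms Der1–Der4 hold. Moreover, for E = Set, a functor u : A → B over a discrete I is a Set_pos-equivalence over I if and only if there exists a function ob(B) → ob(A) over I. -/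
open CategoryTheory

universe u

namespace Derivator

/-- The data of right Kan extensions (Der3R) for a prederivator. -/
structure RanData (D : PreDer.{u}) : Type (u + 1) where
  ran : ∀ {A B : Cat.{u, u}}, (A ⟶ B) → (D.Dia A ⥤ D.Dia B)
  radj : ∀ {A B : Cat.{u, u}} (F : A ⟶ B), D.res F ⊣ ran F

section RightMate

variable (D : PreDer.{u}) (R : RanData D)

/-- The component at `X` of the canonical mate `u^* v_* → p_* q^*` associated to a
square with a 2-cell `μ : u ∘ p ⟶ v ∘ q`. -/
def rmateApp {P A B C : Cat.{u, u}} (p : P ⟶ A) (q : P ⟶ B) (F : A ⟶ C) (G : B ⟶ C)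
    (μ : p ≫ F ⟶ q ≫ G) (X : D.Dia B) :
    (D.res F).obj ((R.ran G).obj X) ⟶ (R.ran p).obj ((D.res q).obj X) :=
  (R.radj p).homEquiv _ _
    (eqToHom (Functor.congr_obj (D.res_comp p F).symm ((R.ran G).obj X)) ≫
      (D.transf μ).app ((R.ran G).obj X) ≫
      eqToHom (Functor.congr_obj (D.res_comp q G) ((R.ran G).obj X)) ≫
      (D.res q).map ((R.radj G).counit.app X))

/-- Axiom (Der4R): comma squares whose upper-right corner is discrete are `D`-exact. -/
def Der4R : Prop :=
  ∀ (I : Type u) {B C : Cat.{u, u}} (U : Cat.of (Discrete I) ⟶ C) (V : B ⟶ C)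
    (X : D.Dia B),
    IsIso (rmateApp D R
      (P := Cat.of (Comma (U.toFunctor : Discrete I ⥤ C) (V.toFunctor : ↑B ⥤ ↑C)))
      (Comma.fst (U.toFunctor : Discrete I ⥤ C) (V.toFunctor : ↑B ⥤ ↑C)).toCatHom
      (Comma.snd (U.toFunctor : Discrete I ⥤ C) (V.toFunctor : ↑B ⥤ ↑C)).toCatHom
      U V (Comma.natTrans (U.toFunctor : Discrete I ⥤ C) (V.toFunctor : ↑B ⥤ ↑C)).toCatHom₂ X)

end RightMate

/-- An `A`-shaped diagram in the preorder reflection `E_pos(A)`: a family of objects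
together with a family of morphisms indexed by the morphisms of `A`, with no
functoriality conditions. -/
structure PosDiag (E : Type (u + 1)) [Category.{u} E] (A : Type u) [Category.{u} A] :
    Type (u + 1) where
  obj : A → E
  map : ∀ {a a' : A}, (a ⟶ a') → (obj a ⟶ obj a')

/-- Morphisms in the preorder `E_pos(A)`: there is a morphism `X ⟶ Y` iff there exists
a family of morphisms `X_a ⟶ Y_a`, and any two such morphisms are equal. -/
def PosHom {E : Type (u + 1)} [Category.{u} E] {A : Type u} [Category.{u} A]
    (X Y : PosDiag E A) : Type u :=
  ULift.{u} (PLift (Nonempty (∀ a : A, X.obj a ⟶ Y.obj a)))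

instance {E : Type (u + 1)} [Category.{u} E] {A : Type u} [Category.{u} A]
    (X Y : PosDiag E A) : Subsingleton (PosHom X Y) :=
  ⟨by rintro ⟨⟨a⟩⟩ ⟨⟨b⟩⟩; rfl⟩

instance posDiagCategory (E : Type (u + 1)) [Category.{u} E] (A : Type u)
    [Category.{u} A] : Category.{u} (PosDiag E A) where
  Hom X Y := PosHom X Y
  id X := ⟨⟨⟨fun a => 𝟙 (X.obj a)⟩⟩⟩
  comp {X Y Z} f g := ⟨⟨f.down.down.elim fun f' => g.down.down.elim fun g' =>
    ⟨fun a => f' a ≫ g' a⟩⟩⟩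
  id_comp _ := Subsingleton.elim (α := PosHom _ _) _ _
  comp_id _ := Subsingleton.elim (α := PosHom _ _) _ _
  assoc _ _ _ := Subsingleton.elim (α := PosHom _ _) _ _

/-- The prederivator `E_pos` of "incoherent" diagrams in `E`, whose value at `A` is the
(large) preorder `E_pos(A)`. -/
def posPre (E : Type (u + 1)) [Category.{u} E] : PreDer.{u} where
  Dia A := PosDiag E ↑A
  str _ := inferInstance
  res {A B} F :=
    { obj := fun X => { obj := fun a => X.obj (F.toFunctor.obj a), map := fun {a a'} α => X.map (F.toFunctor.map α) }
      map := fun {X Y} g => ⟨⟨g.down.down.elim fun g' => ⟨fun a => g' (F.toFunctor.obj a)⟩⟩⟩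
      map_id := fun _ => Subsingleton.elim (α := PosHom _ _) _ _
      map_comp := fun _ _ => Subsingleton.elim (α := PosHom _ _) _ _ }
  res_id A := CategoryTheory.Functor.ext (fun X => rfl)
    (fun X Y f => Subsingleton.elim (α := PosHom _ _) _ _)
  res_comp F G := CategoryTheory.Functor.ext (fun X => rfl)
    (fun X Y f => Subsingleton.elim (α := PosHom _ _) _ _)
  transf {A B F G} μ :=
    { app := fun X => ⟨⟨⟨fun a => X.map (μ.toNatTrans.app a)⟩⟩⟩
      naturality := fun _ _ _ => Subsingleton.elim (α := PosHom _ _) _ _ }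
  transf_id F := by
    apply NatTrans.ext; funext X; exact Subsingleton.elim (α := PosHom _ _) _ _
  transf_comp α β := by
    apply NatTrans.ext; funext X; exact Subsingleton.elim (α := PosHom _ _) _ _

end Derivator

namespace DerivatorAux
open CategoryTheory Limits Derivator

universe v

variable {E : Type (u + 1)} [Category.{u} E]

/-- Constructor for morphisms in `E_pos(A)`. -/
def pmk {A : Type u} [Category.{u} A] {X Y : PosDiag E A}
    (f : ∀ a, X.obj a ⟶ Y.obj a) : X ⟶ Y := ⟨⟨⟨f⟩⟩⟩

lemma posIsIso {A : Type u} [Category.{u} A] {X Y : PosDiag E A} (f : X ⟶ Y) (g : Y ⟶ X) :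
    IsIso f :=
  ⟨g, Subsingleton.elim (α := PosHom _ _) _ _, Subsingleton.elim (α := PosHom _ _) _ _⟩

section Lan

variable [∀ ι : Type u, HasColimitsOfShape (Discrete ι) E]

/-- The value of the left Kan extension in `E_pos`. -/
noncomputable def lanObj {A B : Cat.{u, u}} (F : A ⟶ B) (X : PosDiag E ↑A) : PosDiag E ↑B where
  obj b := ∐ fun p : Σ a : ↑A, (F.toFunctor.obj a ⟶ b) => X.obj p.1
  map {b b'} β := Sigma.desc fun p =>
    Sigma.ι (fun p : Σ a : ↑A, (F.toFunctor.obj a ⟶ b') => X.obj p.1) ⟨p.1, p.2 ≫ β⟩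

/-- The left Kan extension functor in `E_pos`. -/
noncomputable def lanF {A B : Cat.{u, u}} (F : A ⟶ B) : PosDiag E ↑A ⥤ PosDiag E ↑B where
  obj := lanObj F
  map {X Y} f := ⟨⟨f.down.down.elim fun f' => ⟨fun b => Sigma.desc fun p =>
    f' p.1 ≫ Sigma.ι (fun p : Σ a : ↑A, (F.toFunctor.obj a ⟶ b) => Y.obj p.1) p⟩⟩⟩
  map_id _ := Subsingleton.elim (α := PosHom _ _) _ _
  map_comp _ _ := Subsingleton.elim (α := PosHom _ _) _ _

/-- Der3L for `E_pos`. -/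
noncomputable def lanData : LanData (posPre E) where
  lan F := lanF F
  adj {A B} F :=
    { unit :=
        { app := fun X => pmk fun a =>
            Sigma.ι (fun p : Σ a' : ↑A, (F.toFunctor.obj a' ⟶ F.toFunctor.obj a) => X.obj p.1) ⟨a, 𝟙 _⟩
          naturality := fun _ _ _ => Subsingleton.elim (α := PosHom _ _) _ _ }
      counit :=
        { app := fun Y => pmk fun b => Sigma.desc fun p => Y.map p.2
          naturality := fun _ _ _ => Subsingleton.elim (α := PosHom _ _) _ _ }
      left_triangle_components := fun _ => Subsingleton.elim (α := PosHom _ _) _ _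
      right_triangle_components := fun _ => Subsingleton.elim (α := PosHom _ _) _ _ }

end Lan

section Ran

variable [∀ ι : Type u, HasLimitsOfShape (Discrete ι) E]

/-- The value of the right Kan extension in `E_pos`. -/
noncomputable def ranObj {A B : Cat.{u, u}} (F : A ⟶ B) (X : PosDiag E ↑A) : PosDiag E ↑B where
  obj b := ∏ᶜ fun p : Σ a : ↑A, (b ⟶ F.toFunctor.obj a) => X.obj p.1
  map {b b'} β := Pi.lift fun p =>
    Pi.π (fun p : Σ a : ↑A, (b ⟶ F.toFunctor.obj a) => X.obj p.1) ⟨p.1, β ≫ p.2⟩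

/-- The right Kan extension functor in `E_pos`. -/
noncomputable def ranF {A B : Cat.{u, u}} (F : A ⟶ B) : PosDiag E ↑A ⥤ PosDiag E ↑B where
  obj := ranObj F
  map {X Y} f := ⟨⟨f.down.down.elim fun f' => ⟨fun b => Pi.lift fun p =>
    Pi.π (fun p : Σ a : ↑A, (b ⟶ F.toFunctor.obj a) => X.obj p.1) p ≫ f' p.1⟩⟩⟩
  map_id _ := Subsingleton.elim (α := PosHom _ _) _ _
  map_comp _ _ := Subsingleton.elim (α := PosHom _ _) _ _

/-- Der3R for `E_pos`. -/
noncomputable def ranData : RanData (posPre E) where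
  ran F := ranF F
  radj {A B} F :=
    { unit :=
        { app := fun Y => pmk fun b => Pi.lift fun p => Y.map p.2
          naturality := fun _ _ _ => Subsingleton.elim (α := PosHom _ _) _ _ }
      counit :=
        { app := fun X => pmk fun a =>
            Pi.π (fun p : Σ a' : ↑A, (F.toFunctor.obj a ⟶ F.toFunctor.obj a') => X.obj p.1) ⟨a, 𝟙 _⟩
          naturality := fun _ _ _ => Subsingleton.elim (α := PosHom _ _) _ _ }
      left_triangle_components := fun _ => Subsingleton.elim (α := PosHom _ _) _ _
      right_triangle_components := fun _ => Subsingleton.elim (α := PosHom _ _) _ _ }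

end Ran

section Axioms

lemma der1 : Der1 (posPre E) := by
  intro I _ Aι
  exact
    { faithful := ⟨fun {X Y} g₁ g₂ _ => by obtain ⟨⟨_⟩⟩ := g₁; obtain ⟨⟨_⟩⟩ := g₂; rfl⟩
      full := ⟨fun {X Y} g =>
        ⟨pmk fun p => ((g p.1).down.down.some) p.2, by
          funext i; exact Subsingleton.elim (α := PosHom _ _) _ _⟩⟩
      essSurj := ⟨fun Xi =>
        ⟨{ obj := fun p => (Xi p.1).obj p.2
           map := fun {p q} f => by
             exact CategoryTheory.Sigma.SigmaHom.casesOn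
               (motive := fun p q _ => (Xi p.1).obj p.2 ⟶ (Xi q.1).obj q.2) f
               (fun g => (Xi _).map g) },
          ⟨{ hom := fun i => pmk fun a => 𝟙 _
             inv := fun i => pmk fun a => 𝟙 _
             hom_inv_id := by funext i; exact Subsingleton.elim (α := PosHom _ _) _ _
             inv_hom_id := by funext i; exact Subsingleton.elim (α := PosHom _ _) _ _ }⟩⟩⟩ }

lemma der2 : Der2 (posPre E) := by
  intro A
  refine ⟨fun {X Y} f hf => ?_⟩
  have inv := (CategoryTheory.inv (((posPre E).res (objIncl A)).map f))
  exact posIsIso f (pmk fun a => inv.down.down.some ⟨a⟩)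

variable [∀ ι : Type u, HasColimitsOfShape (Discrete ι) E]

lemma der4L : Der4L (posPre E) lanData := by
  intro A C F I G X
  apply posIsIso
  exact pmk fun i => Sigma.desc fun p =>
    Sigma.ι (fun q : Σ e : Comma F.toFunctor G.toFunctor, (e.right ⟶ i) =>
      X.obj q.1.left) ⟨⟨p.1, i, p.2⟩, 𝟙 i⟩

variable [∀ ι : Type u, HasLimitsOfShape (Discrete ι) E]

lemma der4R : Der4R (posPre E) ranData := by
  intro I B C U V X
  apply posIsIso
  exact pmk fun i => Pi.lift fun p =>
    Pi.π (fun q : Σ e : Comma U.toFunctor V.toFunctor, (i ⟶ e.left) =>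
      X.obj q.1.right) ⟨⟨i, p.1, p.2⟩, 𝟙 i⟩

end Axioms

end DerivatorAux

open Derivator in
/-- The preorder reflection construction `E ↦ E_pos(A)` defines a
derivator when `E` has small products and coproducts: each `E_pos(A)` is a (large)
preorder, the restriction functors have both adjoints (Der3L and Der3R), and axioms
Der1, Der2, Der4L, Der4R hold.  Moreover, for `E = Set`, a functor `u : A ⟶ B` over a
discrete `I` is a `Set_pos`-equivalence over `I` if and only if there exists a function
`ob B → ob A` over `I`. -/
theorem posPre_isDerivator_and_posEquiv_characterization
    (E : Type (u + 1)) [Category.{u} E]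
    (hProd : ∀ ι : Type u, Limits.HasLimitsOfShape (Discrete ι) E)
    (hCoprod : ∀ ι : Type u, Limits.HasColimitsOfShape (Discrete ι) E) :
    (∃ (Lp : LanData (posPre E)) (Rp : RanData (posPre E)),
      IsLeftDerivator (posPre E) Lp ∧ Der4R (posPre E) Rp) ∧
    (∀ {A B : Cat.{u, u}} (I : Type u) (F : A ⟶ B) (V : B ⟶ Cat.of (Discrete I)),
      IsDEquiv (posPre (Type u)) I F V ↔
        ∃ s : ↑B → ↑A, ∀ b : ↑B, (F ≫ V).toFunctor.obj (s b) = V.toFunctor.obj b) := by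
  haveI := hProd
  haveI := hCoprod
  constructor
  · exact ⟨DerivatorAux.lanData, DerivatorAux.ranData,
      ⟨DerivatorAux.der1, DerivatorAux.der2, DerivatorAux.der4L⟩, DerivatorAux.der4R⟩
  · intro A B I F V
    constructor
    · intro h
      classical
      let X : PosDiag (Type u) (Discrete I) :=
        { obj := fun _ => PUnit, map := fun _ => 𝟙 _ }
      let Y : PosDiag (Type u) (Discrete I) :=
        { obj := fun i => {a : ↑A // V.toFunctor.obj (F.toFunctor.obj a) = i}
          map := fun {i i'} f => TypeCat.ofHom fun x => ⟨x.1, x.2.trans (Discrete.ext (Discrete.eq_of_hom f))⟩ }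
      obtain ⟨g, -⟩ := (h X Y).2
        (DerivatorAux.pmk fun a => TypeCat.ofHom fun _ =>
          (⟨a, rfl⟩ : {a' : ↑A // V.toFunctor.obj (F.toFunctor.obj a') = V.toFunctor.obj (F.toFunctor.obj a)}))
      obtain ⟨g'⟩ := g.down.down
      exact ⟨fun b => (g' b PUnit.unit).1, fun b => (g' b PUnit.unit).2⟩
    · rintro ⟨s, hs⟩ X Y
      refine ⟨fun g₁ g₂ _ => by obtain ⟨⟨_⟩⟩ := g₁; obtain ⟨⟨_⟩⟩ := g₂; rfl, fun y => ?_⟩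
      obtain ⟨f⟩ := y.down.down
      exact ⟨DerivatorAux.pmk fun b =>
        eqToHom (congrArg X.obj (hs b)).symm ≫ f (s b) ≫ eqToHom (congrArg Y.obj (hs b)),
        Subsingleton.elim (α := PosHom _ _) _ _⟩
end
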